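/- arXiv:1603.04258 — 4 statements merged into one kernel-verified Lean document; each statement's English description precedes it below -/
import Mathlib

section
/- Let G = G₁□G₂□⋯□G_k be the Cartesian product of finite connected simple graphs G₁,…,G_k. If u=(u₁,…,u_k) and v=(v₁,…,v_k) are vertices of G with σ_{G_i}(u_i,v_i)=σ_i, d_{G_i}(u_i,v_i)=d_i, and d=∑_{i=1}^k d_i, then σ_G(u,v) = σ₁σ₂⋯σ_k · C(d,d₁)·C(d−d₁,d₂)·C(d−d₁−d₂,d₃)⋯1, i.e. σ_G(u,v) = (∏_i σ_i) · d!/(d₁!d₂!⋯d_k!). -/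
open SimpleGraph Finset

/-- The number of shortest `u`-`v` paths (geodesics) in `G`:
the number of paths from `u` to `v` whose length equals the distance `d_G(u,v)`. -/
noncomputable def geodesicCount {V : Type*} (G : SimpleGraph V) (u v : V) : ℕ :=
  Nat.card {p : G.Walk u v // p.IsPath ∧ p.length = G.dist u v}

/-- The number of shortest `u`-`v` paths in `G` that pass through the vertex `x`. -/
noncomputable def geodesicCountThrough {V : Type*} (G : SimpleGraph V) (u v x : V) : ℕ :=
  Nat.card {p : G.Walk u v // p.IsPath ∧ p.length = G.dist u v ∧ x ∈ p.support}

/-- The Cartesian (box) product of a family of graphs: two tuples are adjacent iff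
they agree in all but one coordinate and differ by an edge in that coordinate. -/
def boxProdPi {ι : Type*} {V : ι → Type*} (G : ∀ i, SimpleGraph (V i)) :
    SimpleGraph (∀ i, V i) where
  Adj u v := ∃ i, (G i).Adj (u i) (v i) ∧ ∀ j, j ≠ i → u j = v j
  symm := by
    constructor
    rintro u v ⟨i, hadj, heq⟩
    exact ⟨i, hadj.symm, fun j hj => (heq j hj).symm⟩
  loopless := by
    constructor
    rintro u ⟨i, hadj, -⟩
    exact (G i).irrefl hadj

section AuxGeneral

variable {W : Type*} (G : SimpleGraph W)

lemma geodesicCount_eq_card_walks (u v : W) :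
    geodesicCount G u v = Nat.card {p : G.Walk u v // p.length = G.dist u v} :=
  Nat.card_congr (Equiv.subtypeEquivRight (fun p =>
    ⟨fun h => h.2, fun h => ⟨p.isPath_of_length_eq_dist h, h⟩⟩))

lemma geodesicCount_self (u : W) : geodesicCount G u u = 1 := by
  rw [geodesicCount_eq_card_walks, Nat.card_eq_one_iff_exists]
  refine ⟨⟨Walk.nil, by simp [SimpleGraph.dist_self]⟩, ?_⟩
  rintro ⟨p, hp⟩
  rw [SimpleGraph.dist_self] at hp
  have : p = Walk.nil := Walk.nil_iff_eq_nil.mp (Walk.length_eq_zero_iff.mp hp)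
  simp [this]

lemma nat_card_sigma' {ι : Type*} [Fintype ι] (T : ι → Type*) [∀ i, Finite (T i)] :
    Nat.card ((i : ι) × T i) = ∑ i, Nat.card (T i) := by
  haveI : ∀ i, Fintype (T i) := fun i => Fintype.ofFinite _
  simp [Nat.card_eq_fintype_card]

lemma exists_adj_dist_succ {x y : W} (h : G.dist x y ≠ 0) :
    ∃ w, G.Adj x w ∧ G.dist w y + 1 = G.dist x y := by
  obtain ⟨p, hp⟩ := SimpleGraph.exists_walk_of_dist_ne_zero h
  cases p with
  | nil =>
    rw [Walk.length_nil] at hp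
    exact absurd hp.symm h
  | @cons _ w _ hadj q =>
    rw [Walk.length_cons] at hp
    have hq1 : G.dist w y ≤ q.length := SimpleGraph.dist_le q
    obtain ⟨r, hr⟩ := (q.reachable).exists_walk_length_eq_dist
    have hq2 : G.dist x y ≤ G.dist w y + 1 := by
      have := SimpleGraph.dist_le (Walk.cons hadj r)
      rwa [Walk.length_cons, hr] at this
    exact ⟨w, hadj, by omega⟩

lemma geodesicCount_rec [Fintype W] [DecidableEq W] [DecidableRel G.Adj]
    {u v : W} (h : G.dist u v ≠ 0) :
    geodesicCount G u v =
      ∑ w : {w : W // G.Adj u w ∧ G.dist w v + 1 = G.dist u v},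
        geodesicCount G (w : W) v := by
  haveI : LocallyFinite G := fun w => Fintype.ofFinite _
  rw [geodesicCount_eq_card_walks]
  have e : {p : G.Walk u v // p.length = G.dist u v} ≃
      (w : {w : W // G.Adj u w ∧ G.dist w v + 1 = G.dist u v}) ×
        {q : G.Walk (w : W) v // q.length = G.dist (w : W) v} := by
    refine (Equiv.ofBijective
      (fun a => ⟨Walk.cons a.1.2.1 a.2.1, by
          rw [Walk.length_cons, a.2.2, a.1.2.2]⟩) ⟨?_, ?_⟩).symm
    · rintro ⟨⟨w, hw⟩, ⟨q, hq⟩⟩ ⟨⟨w', hw'⟩, ⟨q', hq'⟩⟩ hEq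
      simp only [Subtype.mk.injEq] at hEq
      injection hEq with h1 h2 h3 h4
      subst h2
      have hqq : q = q' := eq_of_heq h4
      subst hqq
      rfl
    · rintro ⟨p, hp⟩
      cases p with
      | nil =>
        rw [Walk.length_nil] at hp
        exact absurd hp.symm h
      | @cons _ w _ hadj q =>
        rw [Walk.length_cons] at hp
        have hq1 : G.dist w v ≤ q.length := SimpleGraph.dist_le q
        obtain ⟨r, hr⟩ := (q.reachable).exists_walk_length_eq_dist
        have hq2 : G.dist u v ≤ G.dist w v + 1 := by
          have := SimpleGraph.dist_le (Walk.cons hadj r)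
          rwa [Walk.length_cons, hr] at this
        have hkey : G.dist w v + 1 = G.dist u v := by omega
        have hql : q.length = G.dist w v := by omega
        exact ⟨⟨⟨w, hadj, hkey⟩, ⟨q, hql⟩⟩, rfl⟩
  rw [Nat.card_congr e, nat_card_sigma']
  exact Finset.sum_congr rfl fun w _ => (geodesicCount_eq_card_walks G _ v).symm

end AuxGeneral

section AuxProd

variable {k : ℕ} {V : Fin k → Type*}

lemma boxProdPi_exists_walk (G : ∀ i, SimpleGraph (V i)) (hconn : ∀ i, (G i).Connected) :
    ∀ (n : ℕ) (u v : ∀ i, V i), (∑ i, (G i).dist (u i) (v i)) = n →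
      ∃ p : (boxProdPi G).Walk u v, p.length = n := by
  intro n
  induction n with
  | zero =>
    intro u v h
    have hz : ∀ i, (G i).dist (u i) (v i) = 0 := fun i =>
      (Finset.sum_eq_zero_iff.mp h) i (mem_univ i)
    have huv : u = v := funext fun i => ((hconn i).dist_eq_zero_iff).mp (hz i)
    subst huv
    exact ⟨Walk.nil, rfl⟩
  | succ n ih =>
    intro u v h
    have hex : ∃ i, (G i).dist (u i) (v i) ≠ 0 := by
      by_contra hc
      push_neg at hc
      have := Finset.sum_eq_zero (s := (univ : Finset (Fin k))) (fun i _ => hc i)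
      omega
    obtain ⟨i, hi⟩ := hex
    obtain ⟨w, hadj, hkey⟩ := exists_adj_dist_succ (G i) hi
    have hadj' : (boxProdPi G).Adj u (Function.update u i w) := by
      refine ⟨i, by simpa using hadj, fun j hj => by
        simp [Function.update_of_ne hj]⟩
    have hsum : ∑ j, (G j).dist (Function.update u i w j) (v j) = n := by
      have e : (fun j => (G j).dist (Function.update u i w j) (v j))
          = Function.update (fun j => (G j).dist (u j) (v j)) i ((G i).dist w (v i)) := by
        funext j
        rcases eq_or_ne j i with rfl | hji
        · simp
        · simp [Function.update_of_ne hji]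
      have h1 : ∑ j, (G j).dist (Function.update u i w j) (v j)
          = (G i).dist w (v i) + ∑ j ∈ univ \ {i}, (G j).dist (u j) (v j) := by
        rw [e, Finset.sum_update_of_mem (mem_univ i)]
      have h2 : ∑ j, (G j).dist (u j) (v j)
          = (G i).dist (u i) (v i) + ∑ j ∈ univ \ {i}, (G j).dist (u j) (v j) :=
        Finset.sum_eq_add_sum_sdiff_singleton_of_mem (mem_univ i) _
      omega
    obtain ⟨P, hP⟩ := ih (Function.update u i w) v hsum
    exact ⟨Walk.cons hadj' P, by rw [Walk.length_cons, hP]⟩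

lemma boxProdPi_sum_dist_le (G : ∀ i, SimpleGraph (V i)) (hconn : ∀ i, (G i).Connected)
    {u v : ∀ i, V i} (p : (boxProdPi G).Walk u v) :
    ∑ i, (G i).dist (u i) (v i) ≤ p.length := by
  induction p with
  | nil => simp
  | @cons a b c hadj q ih =>
    obtain ⟨i, hi, hother⟩ := hadj
    show _ ≤ q.length + 1
    have key : ∀ j : Fin k, (G j).dist (a j) (c j)
        ≤ (if j = i then 1 else 0) + (G j).dist (b j) (c j) := by
      intro j
      rcases eq_or_ne j i with rfl | hji
      · have h1 : (G j).dist (a j) (b j) ≤ 1 := by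
          have := SimpleGraph.dist_le hi.toWalk
          simpa using this
        have h2 := (hconn j).dist_triangle (u := a j) (v := b j) (w := c j)
        rw [if_pos rfl]
        omega
      · rw [hother j hji]
        simp
    calc ∑ j, (G j).dist (a j) (c j)
        ≤ ∑ j, ((if j = i then 1 else 0) + (G j).dist (b j) (c j)) :=
          Finset.sum_le_sum (fun j _ => key j)
      _ = 1 + ∑ j, (G j).dist (b j) (c j) := by
          rw [Finset.sum_add_distrib]
          simp
      _ ≤ q.length + 1 := by omega

lemma dist_boxProdPi (G : ∀ i, SimpleGraph (V i)) (hconn : ∀ i, (G i).Connected)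
    (u v : ∀ i, V i) :
    (boxProdPi G).dist u v = ∑ i, (G i).dist (u i) (v i) := by
  obtain ⟨p, hp⟩ := boxProdPi_exists_walk G hconn _ u v rfl
  refine le_antisymm (hp ▸ SimpleGraph.dist_le p) ?_
  obtain ⟨q, hq⟩ := (p.reachable).exists_walk_length_eq_dist
  rw [← hq]
  exact boxProdPi_sum_dist_le G hconn q

lemma multinomial_rec (d : Fin k → ℕ) (h : ∑ i, d i ≠ 0) :
    ∑ i, (if d i ≠ 0 then Nat.multinomial Finset.univ (Function.update d i (d i - 1)) else 0)
      = Nat.multinomial Finset.univ d := by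
  have hP : 0 < ∏ i, (d i).factorial := Finset.prod_pos fun i _ => (d i).factorial_pos
  refine Nat.eq_of_mul_eq_mul_left hP ?_
  rw [Finset.mul_sum]
  have hterm : ∀ i : Fin k,
      (∏ j, (d j).factorial) *
          (if d i ≠ 0 then Nat.multinomial Finset.univ (Function.update d i (d i - 1)) else 0)
        = d i * (∑ j, d j - 1).factorial := by
    intro i
    by_cases hdi : d i = 0
    · simp [hdi]
    · rw [if_pos hdi]
      have hupd : ∑ j, Function.update d i (d i - 1) j = ∑ j, d j - 1 := by
        rw [Finset.sum_update_of_mem (mem_univ i)]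
        have h2 : ∑ j, d j = d i + ∑ j ∈ univ \ {i}, d j :=
          Finset.sum_eq_add_sum_sdiff_singleton_of_mem (mem_univ i) _
        omega
      have hprod : (∏ j, (d j).factorial) = d i * ∏ j, (Function.update d i (d i - 1) j).factorial := by
        have e : (fun j => (Function.update d i (d i - 1) j).factorial)
            = Function.update (fun j => (d j).factorial) i ((d i - 1).factorial) := by
          funext j
          rcases eq_or_ne j i with rfl | hji
          · simp
          · simp [Function.update_of_ne hji]
        rw [e, Finset.prod_update_of_mem (mem_univ i),
          Finset.prod_eq_mul_prod_sdiff_singleton_of_mem (mem_univ i) (fun j => (d j).factorial),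
          ← Nat.mul_factorial_pred hdi]
        ring
      rw [hprod, mul_assoc, Nat.multinomial_spec, hupd]
  calc ∑ i, (∏ j, (d j).factorial) *
        (if d i ≠ 0 then Nat.multinomial Finset.univ (Function.update d i (d i - 1)) else 0)
      = ∑ i, d i * (∑ j, d j - 1).factorial := Finset.sum_congr rfl fun i _ => hterm i
    _ = (∑ i, d i) * (∑ j, d j - 1).factorial := by rw [Finset.sum_mul]
    _ = (∑ j, d j).factorial := Nat.mul_factorial_pred h
    _ = (∏ j, (d j).factorial) * Nat.multinomial Finset.univ d := (Nat.multinomial_spec _ _).symm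

lemma sum_dist_update (G : ∀ i, SimpleGraph (V i)) (u v : ∀ i, V i) (i : Fin k) (x : V i) :
    ∑ j, (G j).dist (Function.update u i x j) (v j)
      = (G i).dist x (v i) + ∑ j ∈ univ \ {i}, (G j).dist (u j) (v j) := by
  have e : (fun j => (G j).dist (Function.update u i x j) (v j))
      = Function.update (fun j => (G j).dist (u j) (v j)) i ((G i).dist x (v i)) := by
    funext j
    rcases eq_or_ne j i with rfl | hji
    · simp
    · simp [Function.update_of_ne hji]
  rw [e, Finset.sum_update_of_mem (mem_univ i)]

lemma geodesicCount_boxProdPi_aux [∀ i, Fintype (V i)]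
    (G : ∀ i, SimpleGraph (V i)) (hconn : ∀ i, (G i).Connected) (v : ∀ i, V i) :
    ∀ (n : ℕ) (u : ∀ i, V i), (∑ i, (G i).dist (u i) (v i)) = n →
      geodesicCount (boxProdPi G) u v =
        (∏ i, geodesicCount (G i) (u i) (v i)) *
          Nat.multinomial Finset.univ (fun i => (G i).dist (u i) (v i)) := by
  intro n
  induction n with
  | zero =>
    intro u h
    have hz : ∀ i, (G i).dist (u i) (v i) = 0 := fun i =>
      (Finset.sum_eq_zero_iff.mp h) i (mem_univ i)
    have huv : u = v := funext fun i => ((hconn i).dist_eq_zero_iff).mp (hz i)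
    subst huv
    have hm : Nat.multinomial Finset.univ (fun i => (G i).dist (u i) (u i)) = 1 := by
      have hs := Nat.multinomial_spec (univ : Finset (Fin k)) (fun i => (G i).dist (u i) (u i))
      simpa [SimpleGraph.dist_self] using hs
    rw [hm, geodesicCount_self,
      Finset.prod_congr rfl (fun i _ => geodesicCount_self (G i) (u i))]
    simp
  | succ n ih =>
    intro u hsum
    classical
    have hdistuv : (boxProdPi G).dist u v = n + 1 := by
      rw [dist_boxProdPi G hconn, hsum]
    have hne : (boxProdPi G).dist u v ≠ 0 := by omega
    have hbij : Function.Bijective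
        (fun a : (i : Fin k) ×
            {x : V i // (G i).Adj (u i) x ∧
              (G i).dist x (v i) + 1 = (G i).dist (u i) (v i)} =>
          (⟨Function.update u a.1 a.2.1,
            ⟨a.1, by simpa using a.2.2.1, fun j hj => by simp [Function.update_of_ne hj]⟩,
            by
              rw [dist_boxProdPi G hconn, dist_boxProdPi G hconn, sum_dist_update,
                Finset.sum_eq_add_sum_sdiff_singleton_of_mem (mem_univ a.1)
                  (fun j => (G j).dist (u j) (v j))]
              have := a.2.2.2
              omega⟩ :
            {w : ∀ i, V i // (boxProdPi G).Adj u w ∧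
              (boxProdPi G).dist w v + 1 = (boxProdPi G).dist u v})) := by
      constructor
      · rintro ⟨i, x, hx⟩ ⟨i', x', hx'⟩ hEq
        simp only [Subtype.mk.injEq] at hEq
        rcases eq_or_ne i i' with rfl | hne'
        · have hxx : x = x' := by simpa using congrFun hEq i
          subst hxx
          rfl
        · exfalso
          have h1 := congrFun hEq i
          rw [Function.update_self, Function.update_of_ne hne'] at h1
          exact hx.1.ne h1.symm
      · rintro ⟨w, hadjw, hdw⟩
        obtain ⟨i, hAdj, hother⟩ := hadjw
        have hw : w = Function.update u i (w i) := by
          funext j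
          rcases eq_or_ne j i with rfl | hji
          · simp
          · rw [Function.update_of_ne hji]
            exact (hother j hji).symm
        have hxd : (G i).dist (w i) (v i) + 1 = (G i).dist (u i) (v i) := by
          have h1 := hdw
          rw [dist_boxProdPi G hconn, dist_boxProdPi G hconn,
            Finset.sum_eq_add_sum_sdiff_singleton_of_mem (mem_univ i)
              (fun j => (G j).dist (w j) (v j)),
            Finset.sum_eq_add_sum_sdiff_singleton_of_mem (mem_univ i)
              (fun j => (G j).dist (u j) (v j))] at h1
          have h2 : ∑ j ∈ univ \ {i}, (G j).dist (w j) (v j)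
              = ∑ j ∈ univ \ {i}, (G j).dist (u j) (v j) := by
            refine Finset.sum_congr rfl fun j hj => ?_
            have hji : j ≠ i := by
              simpa using (Finset.mem_sdiff.mp hj).2
            rw [← hother j hji]
          omega
        exact ⟨⟨i, ⟨w i, hAdj, hxd⟩⟩, Subtype.ext hw.symm⟩
    have step : (∑ w : {w : ∀ i, V i // (boxProdPi G).Adj u w ∧
            (boxProdPi G).dist w v + 1 = (boxProdPi G).dist u v},
          geodesicCount (boxProdPi G) (w : ∀ i, V i) v)
        = ∑ i : Fin k,
            ∑ x : {x : V i // (G i).Adj (u i) x ∧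
              (G i).dist x (v i) + 1 = (G i).dist (u i) (v i)},
              geodesicCount (boxProdPi G) (Function.update u i x.1) v := by
      rw [← Fintype.sum_bijective _ hbij
        (fun a => geodesicCount (boxProdPi G) (Function.update u a.1 a.2.1) v)
        (fun w => geodesicCount (boxProdPi G) (w : ∀ i, V i) v)
        (fun a => rfl), ← Finset.univ_sigma_univ, Finset.sum_sigma]
    have hinner : ∀ i : Fin k,
        (∑ x : {x : V i // (G i).Adj (u i) x ∧
            (G i).dist x (v i) + 1 = (G i).dist (u i) (v i)},
          geodesicCount (boxProdPi G) (Function.update u i x.1) v)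
        = (∏ j, geodesicCount (G j) (u j) (v j)) *
            (if (G i).dist (u i) (v i) ≠ 0 then
              Nat.multinomial Finset.univ
                (Function.update (fun j => (G j).dist (u j) (v j)) i
                  ((G i).dist (u i) (v i) - 1))
             else 0) := by
      intro i
      by_cases hDi : (G i).dist (u i) (v i) = 0
      · have hempty : IsEmpty {x : V i // (G i).Adj (u i) x ∧
            (G i).dist x (v i) + 1 = (G i).dist (u i) (v i)} := by
          refine ⟨fun x => ?_⟩
          have := x.2.2
          omega
        rw [if_neg (by simp [hDi])]
        simp
      · have hxterm : ∀ x : {x : V i // (G i).Adj (u i) x ∧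
            (G i).dist x (v i) + 1 = (G i).dist (u i) (v i)},
            geodesicCount (boxProdPi G) (Function.update u i x.1) v
              = geodesicCount (G i) x.1 (v i) *
                ((∏ j ∈ univ \ {i}, geodesicCount (G j) (u j) (v j)) *
                  Nat.multinomial Finset.univ
                    (Function.update (fun j => (G j).dist (u j) (v j)) i
                      ((G i).dist (u i) (v i) - 1))) := by
          intro x
          have hsx : ∑ j, (G j).dist (Function.update u i x.1 j) (v j) = n := by
            rw [sum_dist_update]
            have h2 := Finset.sum_eq_add_sum_sdiff_singleton_of_mem (mem_univ i)
              (fun j => (G j).dist (u j) (v j))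
            have := x.2.2
            omega
          rw [ih (Function.update u i x.1) hsx]
          have eprod : (fun j => geodesicCount (G j) (Function.update u i x.1 j) (v j))
              = Function.update (fun j => geodesicCount (G j) (u j) (v j)) i
                  (geodesicCount (G i) x.1 (v i)) := by
            funext j
            rcases eq_or_ne j i with rfl | hji
            · simp
            · simp [Function.update_of_ne hji]
          have emult : (fun j => (G j).dist (Function.update u i x.1 j) (v j))
              = Function.update (fun j => (G j).dist (u j) (v j)) i
                  ((G i).dist (u i) (v i) - 1) := by
            funext j
            rcases eq_or_ne j i with rfl | hji
            · simp only [Function.update_self]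
              have := x.2.2
              omega
            · simp [Function.update_of_ne hji]
          rw [eprod, Finset.prod_update_of_mem (mem_univ i), emult, mul_assoc]
        rw [if_pos hDi]
        calc (∑ x : {x : V i // (G i).Adj (u i) x ∧
              (G i).dist x (v i) + 1 = (G i).dist (u i) (v i)},
            geodesicCount (boxProdPi G) (Function.update u i x.1) v)
            = ∑ x : {x : V i // (G i).Adj (u i) x ∧
                (G i).dist x (v i) + 1 = (G i).dist (u i) (v i)},
                geodesicCount (G i) x.1 (v i) *
                  ((∏ j ∈ univ \ {i}, geodesicCount (G j) (u j) (v j)) *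
                    Nat.multinomial Finset.univ
                      (Function.update (fun j => (G j).dist (u j) (v j)) i
                        ((G i).dist (u i) (v i) - 1))) :=
              Finset.sum_congr rfl fun x _ => hxterm x
          _ = (∑ x : {x : V i // (G i).Adj (u i) x ∧
                (G i).dist x (v i) + 1 = (G i).dist (u i) (v i)},
                geodesicCount (G i) x.1 (v i)) *
                  ((∏ j ∈ univ \ {i}, geodesicCount (G j) (u j) (v j)) *
                    Nat.multinomial Finset.univ
                      (Function.update (fun j => (G j).dist (u j) (v j)) i
                        ((G i).dist (u i) (v i) - 1))) := by
              rw [Finset.sum_mul]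
          _ = geodesicCount (G i) (u i) (v i) *
                ((∏ j ∈ univ \ {i}, geodesicCount (G j) (u j) (v j)) *
                  Nat.multinomial Finset.univ
                    (Function.update (fun j => (G j).dist (u j) (v j)) i
                      ((G i).dist (u i) (v i) - 1))) := by
              rw [← geodesicCount_rec (G i) hDi]
          _ = (∏ j, geodesicCount (G j) (u j) (v j)) *
                Nat.multinomial Finset.univ
                  (Function.update (fun j => (G j).dist (u j) (v j)) i
                    ((G i).dist (u i) (v i) - 1)) := by
              rw [Finset.prod_eq_mul_prod_sdiff_singleton_of_mem (mem_univ i)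
                (fun j => geodesicCount (G j) (u j) (v j))]
              ring
    rw [geodesicCount_rec _ hne, step,
      Finset.sum_congr rfl (fun i _ => hinner i), ← Finset.mul_sum]
    congr 1
    exact multinomial_rec (fun j => (G j).dist (u j) (v j))
      (show (∑ i : Fin k, (G i).dist (u i) (v i)) ≠ 0 by omega)


end AuxProd

/-- For the Cartesian product `G = G₁ □ ⋯ □ Gₖ` of finite connected
graphs, with `σᵢ = σ_{Gᵢ}(uᵢ,vᵢ)`, `dᵢ = d_{Gᵢ}(uᵢ,vᵢ)` and `d = ∑ dᵢ`, the number of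
shortest `u`-`v` paths is `σ_G(u,v) = (∏ᵢ σᵢ) · C(d,d₁)·C(d−d₁,d₂)⋯1 = (∏ᵢ σᵢ) · d!/(d₁!⋯dₖ!)`,
the latter factor being the multinomial coefficient of `(d₁, …, dₖ)`. -/
theorem geodesicCount_boxProdPi {k : ℕ} {V : Fin k → Type*} [∀ i, Fintype (V i)]
    (G : ∀ i, SimpleGraph (V i)) (hconn : ∀ i, (G i).Connected)
    (u v : ∀ i, V i) (σ d : Fin k → ℕ)
    (hσ : ∀ i, geodesicCount (G i) (u i) (v i) = σ i)
    (hd : ∀ i, (G i).dist (u i) (v i) = d i) :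
    geodesicCount (boxProdPi G) u v = (∏ i, σ i) * Nat.multinomial Finset.univ d := by
  have h := geodesicCount_boxProdPi_aux G hconn v (∑ i, (G i).dist (u i) (v i)) u rfl
  rw [h, Finset.prod_congr rfl (fun i _ => hσ i),
    Nat.multinomial_congr (fun i _ => hd i)]
end

section
/- Let G and H be finite connected simple graphs, let u=(g,h), v=(g',h') be distinct vertices of G□H, and let x=(g₀,h₀) be a vertex of G□H distinct from u and v. Then the pair-dependency satisfies δ_{G□H}(u,v|x) = δ_G(g,g'|g₀) · δ_H(h,h'|h₀) · (d₁·d₂)/d, where d₁ = C(d_G(g,g₀)+d_H(h,h₀), d_G(g,g₀)), d₂ = C(d_G(g₀,g')+d_H(h₀,h'), d_G(g₀,g')), and d = C(d_G(g,g')+d_H(h,h'), d_G(g,g')). -/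
open SimpleGraph Finset

/-- The pair-dependency of the pair `{u,v}` on `x`:
`δ(u,v|x) = σ(u,v|x) / σ(u,v)`. -/
noncomputable def pairDependency {V : Type*} (G : SimpleGraph V) (u v x : V) : ℚ :=
  (geodesicCountThrough G u v x : ℚ) / (geodesicCount G u v : ℚ)

section Auxiliary

variable {α β : Type*} {G : SimpleGraph α} {H : SimpleGraph β}

/-- Finiteness of walks of a fixed length. -/
lemma finite_walk_length_eq [Fintype α] (u v : α) (n : ℕ) :
    Finite {p : G.Walk u v // p.length = n} := by
  classical
  have : {p : G.Walk u v | p.length = n}.Finite := by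
    rw [← SimpleGraph.coe_finsetWalkLength_eq]
    exact (G.finsetWalkLength n u v).finite_toSet
  exact this.to_subtype

lemma geodesicCount_eq_card (u v : α) :
    geodesicCount G u v = Nat.card {p : G.Walk u v // p.length = G.dist u v} :=
  Nat.card_congr <| Equiv.subtypeEquivRight fun p =>
    ⟨fun hp => hp.2, fun hp => ⟨p.isPath_of_length_eq_dist hp, hp⟩⟩

section Split
variable [DecidableEq α]

lemma takeUntil_start {x v : α} (r : G.Walk x v) (h : x ∈ r.support) :
    r.takeUntil x h = Walk.nil := by
  cases r with
  | nil => rfl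
  | cons h p => simp [Walk.takeUntil]

lemma dropUntil_start {x v : α} (r : G.Walk x v) (h : x ∈ r.support) :
    r.dropUntil x h = r := by
  cases r with
  | nil => rfl
  | cons h p => simp [Walk.dropUntil]

lemma takeUntil_append {u x v : α} (q : G.Walk u x) (r : G.Walk x v)
    (hc : q.support.count x = 1) (h : x ∈ (q.append r).support) :
    (q.append r).takeUntil x h = q := by
  induction q with
  | nil => simpa using takeUntil_start r h
  | @cons a b c hab q ih =>
    have hend : 0 < q.support.count c := List.count_pos_iff.mpr q.end_mem_support
    have hax : a ≠ c := by
      intro hax; subst hax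
      rw [Walk.support_cons, List.count_cons_self] at hc
      omega
    have h' : c ∈ (q.append r).support := by
      have := h; rw [Walk.cons_append, Walk.support_cons] at this
      cases this with
      | head => exact absurd rfl hax
      | tail _ h => exact h
    have hstep : ((Walk.cons hab (q.append r)).takeUntil c
        (by rw [Walk.support_cons]; exact List.mem_cons_of_mem _ h')) =
        Walk.cons hab ((q.append r).takeUntil c h') := by
      simp [Walk.takeUntil, hax]
    have hc' : q.support.count c = 1 := by
      rw [Walk.support_cons, List.count_cons_of_ne hax] at hc; exact hc
    exact hstep.trans (congrArg (Walk.cons hab) (ih r hc' h'))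

lemma dropUntil_append {u x v : α} (q : G.Walk u x) (r : G.Walk x v)
    (hc : q.support.count x = 1) (h : x ∈ (q.append r).support) :
    (q.append r).dropUntil x h = r := by
  induction q with
  | nil => simpa using dropUntil_start r h
  | @cons a b c hab q ih =>
    have hend : 0 < q.support.count c := List.count_pos_iff.mpr q.end_mem_support
    have hax : a ≠ c := by
      intro hax; subst hax
      rw [Walk.support_cons, List.count_cons_self] at hc
      omega
    have h' : c ∈ (q.append r).support := by
      have := h; rw [Walk.cons_append, Walk.support_cons] at this
      cases this with
      | head => exact absurd rfl hax
      | tail _ h => exact h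
    have hstep : ((Walk.cons hab (q.append r)).dropUntil c
        (by rw [Walk.support_cons]; exact List.mem_cons_of_mem _ h')) =
        ((q.append r).dropUntil c h') := by
      simp [Walk.dropUntil, hax]
    have hc' : q.support.count c = 1 := by
      rw [Walk.support_cons, List.count_cons_of_ne hax] at hc; exact hc
    exact hstep.trans (ih r hc' h')

end Split

lemma geodesicCount_pos [Fintype α] (hconn : G.Connected) (u v : α) :
    0 < geodesicCount G u v := by
  rw [geodesicCount]
  obtain ⟨p, hp, hl⟩ := ((hconn u v)).exists_path_of_dist
  have : Nonempty {p : G.Walk u v // p.IsPath ∧ p.length = G.dist u v} := ⟨⟨p, hp, hl⟩⟩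
  have hfin := finite_walk_length_eq (G := G) u v (G.dist u v)
  have : Finite {p : G.Walk u v // p.IsPath ∧ p.length = G.dist u v} :=
    Finite.of_injective (fun p => (⟨p.1, p.2.2⟩ : {p : G.Walk u v // p.length = G.dist u v}))
      (by intro a b hab
          simp only [Subtype.mk.injEq] at hab
          exact Subtype.ext hab)
  exact Nat.card_pos

lemma geodesicCountThrough_eq_zero (hconn : G.Connected) {u v x : α}
    (hne : G.dist u x + G.dist x v ≠ G.dist u v) :
    geodesicCountThrough G u v x = 0 := by
  rw [geodesicCountThrough]
  classical
  have : IsEmpty {p : G.Walk u v // p.IsPath ∧ p.length = G.dist u v ∧ x ∈ p.support} := by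
    constructor
    rintro ⟨p, hp, hl, hx⟩
    have h1 : G.dist u x ≤ (p.takeUntil x hx).length := SimpleGraph.dist_le _
    have h2 : G.dist x v ≤ (p.dropUntil x hx).length := SimpleGraph.dist_le _
    have h3 : (p.takeUntil x hx).length + (p.dropUntil x hx).length = p.length := by
      rw [← Walk.length_append, p.take_spec hx]
    have h4 : G.dist u v ≤ G.dist u x + G.dist x v := hconn.dist_triangle
    omega
  simp [Nat.card_of_isEmpty]

lemma geodesicCountThrough_eq_mul (hconn : G.Connected) {u v x : α}
    (hsum : G.dist u x + G.dist x v = G.dist u v) :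
    geodesicCountThrough G u v x = geodesicCount G u x * geodesicCount G x v := by
  rw [geodesicCountThrough, geodesicCount, geodesicCount]
  classical
  have E : {p : G.Walk u v // p.IsPath ∧ p.length = G.dist u v ∧ x ∈ p.support} ≃
      {q : G.Walk u x // q.IsPath ∧ q.length = G.dist u x} ×
      {r : G.Walk x v // r.IsPath ∧ r.length = G.dist x v} := by
    refine
      { toFun := fun p =>
          (⟨p.1.takeUntil x p.2.2.2, p.2.1.takeUntil _, ?_⟩,
           ⟨p.1.dropUntil x p.2.2.2, p.2.1.dropUntil _, ?_⟩)
        invFun := fun qr => ⟨qr.1.1.append qr.2.1, ?_, ?_, ?_⟩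
        left_inv := ?_
        right_inv := ?_ }
    · have h1 : G.dist u x ≤ (p.1.takeUntil x p.2.2.2).length := SimpleGraph.dist_le _
      have h2 : G.dist x v ≤ (p.1.dropUntil x p.2.2.2).length := SimpleGraph.dist_le _
      have h3 : (p.1.takeUntil x p.2.2.2).length + (p.1.dropUntil x p.2.2.2).length
          = p.1.length := by
        rw [← Walk.length_append, p.1.take_spec p.2.2.2]
      have hl := p.2.2.1
      omega
    · have h1 : G.dist u x ≤ (p.1.takeUntil x p.2.2.2).length := SimpleGraph.dist_le _
      have h2 : G.dist x v ≤ (p.1.dropUntil x p.2.2.2).length := SimpleGraph.dist_le _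
      have h3 : (p.1.takeUntil x p.2.2.2).length + (p.1.dropUntil x p.2.2.2).length
          = p.1.length := by
        rw [← Walk.length_append, p.1.take_spec p.2.2.2]
      have hl := p.2.2.1
      omega
    · exact (qr.1.1.append qr.2.1).isPath_of_length_eq_dist
        (by rw [Walk.length_append, qr.1.2.2, qr.2.2.2, hsum])
    · rw [Walk.length_append, qr.1.2.2, qr.2.2.2, hsum]
    · rw [Walk.mem_support_append_iff]
      exact Or.inl (Walk.end_mem_support _)
    · rintro ⟨p, hp, hl, hx⟩
      exact Subtype.ext (p.take_spec hx)
    · rintro ⟨⟨q, hq, hql⟩, ⟨r, hr, hrl⟩⟩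
      have hc : q.support.count x = 1 :=
        List.count_eq_one_of_mem hq.support_nodup q.end_mem_support
      have hmem : x ∈ (q.append r).support := by
        rw [Walk.mem_support_append_iff]; exact Or.inl q.end_mem_support
      refine Prod.ext (Subtype.ext ?_) (Subtype.ext ?_)
      · exact takeUntil_append q r hc _
      · exact dropUntil_append q r hc _
  rw [Nat.card_congr E, Nat.card_prod]

open Classical in
/-- Project a walk in `G □ H` to `G`. -/
noncomputable def projL : {x y : α × β} → (G □ H).Walk x y → G.Walk x.1 y.1
  | _, _, .nil => .nil
  | x, _, .cons (v := z) hadj p =>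
    if hg : G.Adj x.1 z.1 ∧ x.2 = z.2 then .cons hg.1 (projL p)
    else (projL p).copy ((hadj.resolve_left hg).2).symm rfl

open Classical in
/-- Project a walk in `G □ H` to `H`. -/
noncomputable def projR : {x y : α × β} → (G □ H).Walk x y → H.Walk x.2 y.2
  | _, _, .nil => .nil
  | x, _, .cons (v := z) hadj p =>
    if hg : G.Adj x.1 z.1 ∧ x.2 = z.2 then (projR p).copy hg.2.symm rfl
    else .cons (hadj.resolve_left hg).1 (projR p)

open Classical in
/-- The sequence of step directions of a walk in `G □ H` (`true` = `G`-step). -/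
noncomputable def steps : {x y : α × β} → (G □ H).Walk x y → List Bool
  | _, _, .nil => []
  | x, _, .cons (v := z) _ p =>
    (if G.Adj x.1 z.1 ∧ x.2 = z.2 then true else false) :: steps p

lemma length_projL_add_projR : ∀ {x y : α × β} (p : (G □ H).Walk x y),
    (projL p).length + (projR p).length = p.length
  | _, _, .nil => rfl
  | x, _, .cons (v := z) hadj p => by
    have ih := length_projL_add_projR p
    by_cases hg : G.Adj x.1 z.1 ∧ x.2 = z.2 <;>
      simp [projL, projR, hg] <;> omega

lemma length_steps : ∀ {x y : α × β} (p : (G □ H).Walk x y), (steps p).length = p.length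
  | _, _, .nil => rfl
  | x, _, .cons (v := z) hadj p => by simp [steps, length_steps p]

lemma count_true_steps : ∀ {x y : α × β} (p : (G □ H).Walk x y),
    (steps p).count true = (projL p).length
  | _, _, .nil => rfl
  | x, _, .cons (v := z) hadj p => by
    by_cases hg : G.Adj x.1 z.1 ∧ x.2 = z.2 <;>
      simp [steps, projL, hg, List.count_cons, count_true_steps p]

lemma count_false_steps : ∀ {x y : α × β} (p : (G □ H).Walk x y),
    (steps p).count false = (projR p).length
  | _, _, .nil => rfl
  | x, _, .cons (v := z) hadj p => by
    by_cases hg : G.Adj x.1 z.1 ∧ x.2 = z.2 <;>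
      simp [steps, projR, hg, List.count_cons, count_false_steps p]

/-- Interleave a walk in `G` and a walk in `H` according to a list of step directions. -/
noncomputable def shuffle : (L : List Bool) → {a b : α} → {c d : β} →
    (pG : G.Walk a b) → (pH : H.Walk c d) →
    pG.length = L.count true → pH.length = L.count false → (G □ H).Walk (a, c) (b, d)
  | [], _, _, _, _, pG, pH, h1, h2 =>
    Walk.nil.copy rfl (by
      have hab := pG.eq_of_length_eq_zero (by simpa using h1)
      have hcd := pH.eq_of_length_eq_zero (by simpa using h2)
      rw [hab, hcd])
  | true :: L', a, b, c, d, pG, pH, h1, h2 =>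
    match a, pG, h1 with
    | _, .nil, h1 => absurd h1 (by simp)
    | a, .cons (v := m) hadj q, h1 =>
      Walk.cons (show (G □ H).Adj (a, c) (m, c) from Or.inl ⟨hadj, rfl⟩)
        (shuffle L' q pH (by simpa using h1) (by simpa using h2))
  | false :: L', a, b, c, d, pG, pH, h1, h2 =>
    match c, pH, h2 with
    | _, .nil, h2 => absurd h2 (by simp)
    | c, .cons (v := m) hadj q, h2 =>
      Walk.cons (show (G □ H).Adj (a, c) (a, m) from Or.inr ⟨hadj, rfl⟩)
        (shuffle L' pG q (by simpa using h1) (by simpa using h2))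

lemma steps_copy {x y x' y' : α × β} (p : (G □ H).Walk x y) (hx : x = x') (hy : y = y') :
    steps (p.copy hx hy) = steps p := by subst hx; subst hy; rfl

lemma projL_copy {x y x' y' : α × β} (p : (G □ H).Walk x y) (hx : x = x') (hy : y = y') :
    projL (p.copy hx hy) = (projL p).copy (by rw [hx]) (by rw [hy]) := by
  subst hx; subst hy; rfl

lemma projR_copy {x y x' y' : α × β} (p : (G □ H).Walk x y) (hx : x = x') (hy : y = y') :
    projR (p.copy hx hy) = (projR p).copy (by rw [hx]) (by rw [hy]) := by
  subst hx; subst hy; rfl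

lemma steps_shuffle (L : List Bool) : ∀ {a b : α} {c d : β} (pG : G.Walk a b)
    (pH : H.Walk c d) (h1 : pG.length = L.count true) (h2 : pH.length = L.count false),
    steps (shuffle L pG pH h1 h2) = L := by
  induction L with
  | nil => intro a b c d pG pH h1 h2; simp [shuffle, steps_copy, steps]
  | cons bb L ih =>
    intro a b c d pG pH h1 h2
    cases bb
    · cases pH with
      | nil => exact absurd h2 (by simp)
      | @cons c m d hadj q =>
        simp only [shuffle, steps]
        rw [if_neg (by rintro ⟨hg, -⟩; exact hg.ne rfl)]
        rw [ih]
    · cases pG with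
      | nil => exact absurd h1 (by simp)
      | @cons a m b hadj q =>
        simp only [shuffle, steps]
        rw [if_pos ⟨hadj, rfl⟩]
        rw [ih]

lemma projL_shuffle (L : List Bool) : ∀ {a b : α} {c d : β} (pG : G.Walk a b)
    (pH : H.Walk c d) (h1 : pG.length = L.count true) (h2 : pH.length = L.count false),
    projL (shuffle L pG pH h1 h2) = pG := by
  induction L with
  | nil =>
    intro a b c d pG pH h1 h2
    cases pG with
    | cons h q => exact absurd h1 (by simp)
    | nil =>
      cases pH with
      | cons h q => exact absurd h2 (by simp)
      | nil => simp [shuffle, projL_copy, projL]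
  | cons bb L ih =>
    intro a b c d pG pH h1 h2
    cases bb
    · cases pH with
      | nil => exact absurd h2 (by simp)
      | @cons c m d hadj q =>
        simp only [shuffle, projL]
        rw [dif_neg (by rintro ⟨hg, -⟩; exact hg.ne rfl)]
        rw [ih]
        simp
    · cases pG with
      | nil => exact absurd h1 (by simp)
      | @cons a m b hadj q =>
        simp only [shuffle, projL]
        rw [dif_pos ⟨hadj, rfl⟩]
        rw [ih]

lemma projR_shuffle (L : List Bool) : ∀ {a b : α} {c d : β} (pG : G.Walk a b)
    (pH : H.Walk c d) (h1 : pG.length = L.count true) (h2 : pH.length = L.count false),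
    projR (shuffle L pG pH h1 h2) = pH := by
  induction L with
  | nil =>
    intro a b c d pG pH h1 h2
    cases pG with
    | cons h q => exact absurd h1 (by simp)
    | nil =>
      cases pH with
      | cons h q => exact absurd h2 (by simp)
      | nil => simp [shuffle, projR_copy, projR]
  | cons bb L ih =>
    intro a b c d pG pH h1 h2
    cases bb
    · cases pH with
      | nil => exact absurd h2 (by simp)
      | @cons c m d hadj q =>
        simp only [shuffle, projR]
        rw [dif_neg (by rintro ⟨hg, -⟩; exact hg.ne rfl)]
        rw [ih]
    · cases pG with
      | nil => exact absurd h1 (by simp)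
      | @cons a m b hadj q =>
        simp only [shuffle, projR]
        rw [dif_pos ⟨hadj, rfl⟩]
        rw [ih]
        simp

lemma shuffle_steps_proj {x y : α × β} (p : (G □ H).Walk x y) : ∀ (a : α) (c : β)
    (ea : x.1 = a) (ec : x.2 = c)
    (h1 : ((projL p).copy ea rfl).length = (steps p).count true)
    (h2 : ((projR p).copy ec rfl).length = (steps p).count false),
    shuffle (steps p) ((projL p).copy ea rfl) ((projR p).copy ec rfl) h1 h2
      = p.copy (by rw [← ea, ← ec]) rfl := by
  induction p with
  | nil =>
    intro a c ea ec h1 h2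
    rename_i x
    obtain ⟨x1, x2⟩ := x
    dsimp only at ea ec
    subst ea; subst ec
    simp [shuffle, projL, projR, steps]
  | @cons x z y hadj p ih =>
    obtain ⟨x1, x2⟩ := x
    obtain ⟨z1, z2⟩ := z
    intro a c ea ec h1 h2
    dsimp only at ea ec
    subst ea; subst ec
    by_cases hg : G.Adj x1 z1 ∧ x2 = z2
    · obtain ⟨hg1, hg2⟩ := hg
      subst hg2
      have key := ih z1 x2 rfl rfl
        (by simp [count_true_steps])
        (by simp [count_false_steps])
      simp only [Walk.copy_rfl_rfl] at key
      simp only [steps, projL, projR, if_pos (show G.Adj x1 z1 ∧ x2 = x2 from ⟨hg1, rfl⟩),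
        dif_pos (show G.Adj x1 z1 ∧ x2 = x2 from ⟨hg1, rfl⟩), Walk.copy_rfl_rfl, shuffle, key]
    · have hadj' := hadj
      rw [boxProd_adj] at hadj'
      obtain ⟨hH1, hH2⟩ := hadj'.resolve_left hg
      dsimp only at hH1 hH2
      subst hH2
      have key := ih x1 z2 rfl rfl
        (by simp [count_true_steps])
        (by simp [count_false_steps])
      simp only [Walk.copy_rfl_rfl] at key
      simp only [steps, projL, projR, if_neg hg, dif_neg hg, Walk.copy_rfl_rfl, shuffle, key]

lemma boxProd_dist_eq (hG : G.Connected) (hH : H.Connected) (x y : α × β) :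
    (G □ H).dist x y = G.dist x.1 y.1 + H.dist x.2 y.2 := by
  apply le_antisymm
  · obtain ⟨pG, hpG⟩ := (hG x.1 y.1).exists_walk_length_eq_dist
    obtain ⟨pH, hpH⟩ := (hH x.2 y.2).exists_walk_length_eq_dist
    have := SimpleGraph.dist_le ((pG.boxProdLeft H x.2).append (Walk.boxProdRight G y.1 pH))
    have l1 : (pG.boxProdLeft H x.2).length = pG.length := Walk.length_map _ _
    have l2 : (Walk.boxProdRight G y.1 pH).length = pH.length := Walk.length_map _ _
    rw [Walk.length_append, l1, l2, hpG, hpH] at this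
    exact this
  · obtain ⟨p, hp⟩ := ((hG.boxProd hH) x y).exists_walk_length_eq_dist
    have e1 : G.dist x.1 y.1 ≤ (projL p).length := SimpleGraph.dist_le _
    have e2 : H.dist x.2 y.2 ≤ (projR p).length := SimpleGraph.dist_le _
    have e3 := length_projL_add_projR p
    omega

lemma count_true_add_count_false : ∀ L : List Bool, L.count true + L.count false = L.length
  | [] => rfl
  | b :: L => by
    have ih := count_true_add_count_false L
    cases b <;> simp [List.count_cons] <;> omega

lemma card_filter_get (L : List Bool) :
    (univ.filter (fun i : Fin L.length => L.get i = true)).card = L.count true := by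
  induction L with
  | nil => simp
  | cons b T ih =>
    rw [Finset.card_filter] at ih ⊢
    simp only [List.length_cons]
    rw [Fin.sum_univ_succ]
    simp only [List.get_eq_getElem] at ih
    cases b <;> simp [List.count_cons, Finset.card_filter, ih, Nat.add_comm]

lemma count_true_ofFn {n : ℕ} (f : Fin n → Bool) :
    (List.ofFn f).count true = (univ.filter (fun i => f i = true)).card := by
  induction n with
  | zero => simp
  | succ n ih =>
    rw [List.ofFn_succ, Finset.card_filter, Fin.sum_univ_succ, ← Finset.card_filter, ← ih]
    cases hf : f 0 <;> simp [List.count_cons, hf, Nat.add_comm]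

lemma card_bool_lists (n k : ℕ) :
    Nat.card {L : List Bool // L.length = n ∧ L.count true = k} = n.choose k := by
  classical
  have E : {L : List Bool // L.length = n ∧ L.count true = k} ≃
      {s : Finset (Fin n) // s.card = k} := by
    refine
      { toFun := fun L => ⟨univ.filter (fun i : Fin n => L.1.get (Fin.cast L.2.1.symm i) = true), ?_⟩
        invFun := fun s => ⟨List.ofFn (fun i : Fin n => decide ((i : Fin n) ∈ s.1)), ?_, ?_⟩
        left_inv := ?_
        right_inv := ?_ }
    · obtain ⟨L, hl, hc⟩ := L
      subst hl
      simpa [Fin.cast_refl] using (card_filter_get L).trans hc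
    · simp
    · rw [count_true_ofFn]
      simp only [decide_eq_true_eq]
      rw [Finset.filter_univ_mem]
      exact s.2
    · rintro ⟨L, hl, hc⟩
      subst hl
      apply Subtype.ext
      apply List.ext_get (by simp)
      intro i h1 h2
      simp [List.get_ofFn]
    · rintro ⟨s, hs⟩
      apply Subtype.ext
      ext i
      simp [List.get_ofFn]
  rw [Nat.card_congr E, Nat.card_eq_fintype_card, Fintype.card_finset_len, Fintype.card_fin]

lemma card_geodesics_boxProd (g g' : α) (h h' : β) :
    Nat.card {p : (G □ H).Walk (g, h) (g', h') // p.length = G.dist g g' + H.dist h h'} =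
      Nat.card {q : G.Walk g g' // q.length = G.dist g g'} *
        Nat.card {r : H.Walk h h' // r.length = H.dist h h'} *
        (G.dist g g' + H.dist h h').choose (G.dist g g') := by
  classical
  have lenL : ∀ p : {p : (G □ H).Walk (g, h) (g', h') //
      p.length = G.dist g g' + H.dist h h'}, (projL p.1).length = G.dist g g' := by
    intro p
    have e1 : G.dist g g' ≤ (projL p.1).length := SimpleGraph.dist_le _
    have e2 : H.dist h h' ≤ (projR p.1).length := SimpleGraph.dist_le _
    have e3 := length_projL_add_projR p.1
    have e4 := p.2
    omega
  have lenR : ∀ p : {p : (G □ H).Walk (g, h) (g', h') //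
      p.length = G.dist g g' + H.dist h h'}, (projR p.1).length = H.dist h h' := by
    intro p
    have e1 : G.dist g g' ≤ (projL p.1).length := SimpleGraph.dist_le _
    have e2 : H.dist h h' ≤ (projR p.1).length := SimpleGraph.dist_le _
    have e3 := length_projL_add_projR p.1
    have e4 := p.2
    omega
  have E : {p : (G □ H).Walk (g, h) (g', h') // p.length = G.dist g g' + H.dist h h'} ≃
      {L : List Bool // L.length = G.dist g g' + H.dist h h' ∧ L.count true = G.dist g g'} ×
      {q : G.Walk g g' // q.length = G.dist g g'} ×
      {r : H.Walk h h' // r.length = H.dist h h'} := by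
    refine
      { toFun := fun p =>
          (⟨steps p.1, by rw [length_steps]; exact p.2, by rw [count_true_steps]; exact lenL p⟩,
           ⟨projL p.1, lenL p⟩, ⟨projR p.1, lenR p⟩)
        invFun := fun t =>
          ⟨shuffle t.1.1 t.2.1.1 t.2.2.1 (by rw [t.2.1.2, t.1.2.2])
            (by have h5 := count_true_add_count_false t.1.1
                have h6 := t.1.2.1
                have h7 := t.1.2.2
                have h8 := t.2.2.2
                omega),
           by rw [← length_steps, steps_shuffle, t.1.2.1]⟩
        left_inv := ?_
        right_inv := ?_ }
    · intro p
      apply Subtype.ext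
      have key := shuffle_steps_proj p.1 g h rfl rfl
        (by simp [count_true_steps]) (by simp [count_false_steps])
      simp only [Walk.copy_rfl_rfl] at key
      exact key
    · rintro ⟨⟨L, hL⟩, ⟨q, hq⟩, ⟨r, hr⟩⟩
      refine Prod.ext (Subtype.ext ?_) (Prod.ext (Subtype.ext ?_) (Subtype.ext ?_))
      · exact steps_shuffle L q r _ _
      · exact projL_shuffle L q r _ _
      · exact projR_shuffle L q r _ _
  rw [Nat.card_congr E, Nat.card_prod, Nat.card_prod, card_bool_lists]
  ring

end Auxiliary

/-- For distinct vertices `u = (g,h)`, `v = (g',h')` of `G □ H` and a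
vertex `x = (g₀,h₀)` distinct from both, the pair-dependency satisfies
`δ_{G□H}(u,v|x) = δ_G(g,g'|g₀) · δ_H(h,h'|h₀) · (d₁·d₂)/d` with the stated binomial
coefficients `d₁`, `d₂`, `d`. -/
theorem pairDependency_boxProd {V W : Type*} [Fintype V] [Fintype W]
    (G : SimpleGraph V) (H : SimpleGraph W) (hG : G.Connected) (hH : H.Connected)
    (g g' g₀ : V) (h h' h₀ : W)
    (huv : (g, h) ≠ (g', h')) (hxu : (g₀, h₀) ≠ (g, h)) (hxv : (g₀, h₀) ≠ (g', h')) :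
    pairDependency (G □ H) (g, h) (g', h') (g₀, h₀) =
      pairDependency G g g' g₀ * pairDependency H h h' h₀ *
        (((G.dist g g₀ + H.dist h h₀).choose (G.dist g g₀) : ℚ) *
          ((G.dist g₀ g' + H.dist h₀ h').choose (G.dist g₀ g') : ℚ) /
            ((G.dist g g' + H.dist h h').choose (G.dist g g') : ℚ)) := by
  classical
  have hbox : (G □ H).Connected := hG.boxProd hH
  have hdist : ∀ (a a' : V) (b b' : W),
      (G □ H).dist (a, b) (a', b') = G.dist a a' + H.dist b b' := fun a a' b b' =>
    boxProd_dist_eq hG hH (a, b) (a', b')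
  have hcnt : ∀ (a a' : V) (b b' : W),
      geodesicCount (G □ H) (a, b) (a', b') =
        geodesicCount G a a' * geodesicCount H b b' *
          (G.dist a a' + H.dist b b').choose (G.dist a a') := by
    intro a a' b b'
    rw [geodesicCount_eq_card, geodesicCount_eq_card, geodesicCount_eq_card]
    have : {p : (G □ H).Walk (a, b) (a', b') // p.length = (G □ H).dist (a, b) (a', b')} =
        {p : (G □ H).Walk (a, b) (a', b') // p.length = G.dist a a' + H.dist b b'} := by
      rw [hdist]
    rw [this]
    exact card_geodesics_boxProd a a' b b'
  by_cases hcG : G.dist g g₀ + G.dist g₀ g' = G.dist g g'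
  · by_cases hcH : H.dist h h₀ + H.dist h₀ h' = H.dist h h'
    · have hsum : (G □ H).dist (g, h) (g₀, h₀) + (G □ H).dist (g₀, h₀) (g', h') =
          (G □ H).dist (g, h) (g', h') := by
        rw [hdist, hdist, hdist]; omega
      have e0 := geodesicCountThrough_eq_mul hbox hsum
      have eG := geodesicCountThrough_eq_mul hG hcG
      have eH := geodesicCountThrough_eq_mul hH hcH
      have hGne : (geodesicCount G g g' : ℚ) ≠ 0 :=
        Nat.cast_ne_zero.mpr (geodesicCount_pos hG g g').ne'
      have hHne : (geodesicCount H h h' : ℚ) ≠ 0 :=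
        Nat.cast_ne_zero.mpr (geodesicCount_pos hH h h').ne'
      have hCne : (((G.dist g g' + H.dist h h').choose (G.dist g g') : ℕ) : ℚ) ≠ 0 :=
        Nat.cast_ne_zero.mpr (Nat.choose_pos (Nat.le_add_right _ _)).ne'
      rw [pairDependency, pairDependency, pairDependency, e0, eG, eH,
        hcnt g g₀ h h₀, hcnt g₀ g' h₀ h', hcnt g g' h h']
      push_cast
      field_simp
    · have hzH := geodesicCountThrough_eq_zero hH hcH
      have htriG : G.dist g g' ≤ G.dist g g₀ + G.dist g₀ g' := hG.dist_triangle
      have htriH : H.dist h h' ≤ H.dist h h₀ + H.dist h₀ h' := hH.dist_triangle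
      have hz : geodesicCountThrough (G □ H) (g, h) (g', h') (g₀, h₀) = 0 := by
        apply geodesicCountThrough_eq_zero hbox
        rw [hdist, hdist, hdist]
        omega
      rw [pairDependency, pairDependency, pairDependency, hz, hzH]
      simp
  · have hzG := geodesicCountThrough_eq_zero hG hcG
    have htriG : G.dist g g' ≤ G.dist g g₀ + G.dist g₀ g' := hG.dist_triangle
    have htriH : H.dist h h' ≤ H.dist h h₀ + H.dist h₀ h' := hH.dist_triangle
    have hz : geodesicCountThrough (G □ H) (g, h) (g', h') (g₀, h₀) = 0 := by
      apply geodesicCountThrough_eq_zero hbox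
      rw [hdist, hdist, hdist]
      omega
    rw [pairDependency, pairDependency, pairDependency, hz, hzG]
    simp
end

section
/- For finite connected simple graphs G and H, the Wiener index of the Cartesian product satisfies W(G□H) = |G|²·W(H) + |H|²·W(G). -/
open SimpleGraph Finset

/-- The Wiener index of `G`: the sum of the distances over all unordered pairs of
vertices (the diagonal contributes `0`, hence the factor `1/2` over ordered pairs). -/
noncomputable def wiener {V : Type*} [Fintype V] (G : SimpleGraph V) : ℚ :=
  (1 / 2) * ∑ u, ∑ v, (G.dist u v : ℚ)

lemma dist_add_dist_le_walk_length {α β : Type*} {G : SimpleGraph α} {H : SimpleGraph β}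
    (hG : G.Connected) (hH : H.Connected)
    {x y : α × β} (w : (G □ H).Walk x y) :
    G.dist x.1 y.1 + H.dist x.2 y.2 ≤ w.length := by
  induction w with
  | nil => simp
  | @cons x y z h w ih =>
    rw [SimpleGraph.Walk.length_cons]
    rcases h with ⟨hA, he⟩ | ⟨hA, he⟩
    · calc G.dist x.1 z.1 + H.dist x.2 z.2
          ≤ (G.dist x.1 y.1 + G.dist y.1 z.1) + H.dist y.2 z.2 := by
            rw [he]; exact add_le_add_left (hG.dist_triangle) _
        _ ≤ (1 + G.dist y.1 z.1) + H.dist y.2 z.2 := by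
            gcongr
            exact le_trans (SimpleGraph.dist_le hA.toWalk) (by simp)
        _ ≤ w.length + 1 := by omega
    · calc G.dist x.1 z.1 + H.dist x.2 z.2
          ≤ G.dist y.1 z.1 + (H.dist x.2 y.2 + H.dist y.2 z.2) := by
            rw [he]; exact add_le_add_right (hH.dist_triangle) _
        _ ≤ G.dist y.1 z.1 + (1 + H.dist y.2 z.2) := by
            gcongr
            exact le_trans (SimpleGraph.dist_le hA.toWalk) (by simp)
        _ ≤ w.length + 1 := by omega

lemma boxProd_dist {α β : Type*} {G : SimpleGraph α} {H : SimpleGraph β}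
    (hG : G.Connected) (hH : H.Connected) (x y : α × β) :
    (G □ H).dist x y = G.dist x.1 y.1 + H.dist x.2 y.2 := by
  refine le_antisymm ?_ ?_
  · obtain ⟨p, hp⟩ := (hG x.1 y.1).exists_walk_length_eq_dist
    obtain ⟨q, hq⟩ := (hH x.2 y.2).exists_walk_length_eq_dist
    calc (G □ H).dist x y ≤ ((p.boxProdLeft H x.2).append (q.boxProdRight G y.1)).length :=
          SimpleGraph.dist_le _
      _ = G.dist x.1 y.1 + H.dist x.2 y.2 := by
          rw [SimpleGraph.Walk.length_append]
          erw [SimpleGraph.Walk.length_map, SimpleGraph.Walk.length_map, hp, hq]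
  · obtain ⟨w, hw⟩ := ((hG.boxProd hH) x y).exists_walk_length_eq_dist
    rw [← hw]
    exact dist_add_dist_le_walk_length hG hH w

lemma sum_sum_add_aux {α β : Type*} [Fintype α] [Fintype β] (f : α → α → ℚ) (g : β → β → ℚ) :
    ∑ a : α, ∑ b : β, ∑ c : α, ∑ d : β, (f a c + g b d) =
    (Fintype.card β : ℚ)^2 * ∑ a, ∑ c, f a c + (Fintype.card α : ℚ)^2 * ∑ b, ∑ d, g b d := by
  have h1 : ∀ (a : α) (b : β), ∑ c : α, ∑ d : β, (f a c + g b d)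
      = (Fintype.card β : ℚ) * ∑ c, f a c + (Fintype.card α : ℚ) * ∑ d, g b d := by
    intro a b
    simp [Finset.sum_add_distrib, Finset.sum_const, Finset.card_univ, Finset.mul_sum]
  simp only [h1, Finset.sum_add_distrib, Finset.sum_const, Finset.card_univ, nsmul_eq_mul,
    ← Finset.mul_sum]
  ring

/-- For finite connected graphs `G`, `H`:
`W(G □ H) = |G|²·W(H) + |H|²·W(G)`. -/
theorem wiener_boxProd {V W : Type*} [Fintype V] [Fintype W]
    (G : SimpleGraph V) (H : SimpleGraph W) (hG : G.Connected) (hH : H.Connected) :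
    wiener (G □ H) =
      (Fintype.card V : ℚ) ^ 2 * wiener H + (Fintype.card W : ℚ) ^ 2 * wiener G := by
  simp only [wiener, Fintype.sum_prod_type, boxProd_dist hG hH]
  push_cast
  rw [sum_sum_add_aux (fun a c => (G.dist a c : ℚ)) (fun b d => (H.dist b d : ℚ))]
  ring
end

section
/- Let r ≥ 1 and let v be any vertex of the r-dimensional hypercube Q_r = □_{i=1}^r K₂. Then the betweenness centrality of v is B(v) = (r−2)·2^{r−2} + 1/2. -/
open SimpleGraph Finset

/-- The betweenness centrality of a vertex `x`: the sum of the pair-dependencies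
`σ(u,v|x)/σ(u,v)` over unordered pairs `{u,v}` with `u ≠ v`, `u ≠ x`, `v ≠ x`
(each unordered pair is counted once, hence the factor `1/2` over ordered pairs). -/
noncomputable def betweenness {V : Type*} [Fintype V] [DecidableEq V] (G : SimpleGraph V) (x : V) : ℚ :=
  (1 / 2) * ∑ u, ∑ v,
    if u ≠ v ∧ u ≠ x ∧ v ≠ x then pairDependency G u v x else 0

namespace Hyp

open scoped symmDiff


variable {r : ℕ}

abbrev V (r : ℕ) := Fin r → Fin 2

def Q (r : ℕ) : SimpleGraph (V r) := boxProdPi fun _ : Fin r => (⊤ : SimpleGraph (Fin 2))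

def flip (u : V r) (i : Fin r) : V r := Function.update u i (u i + 1)

def diff (u v : V r) : Finset (Fin r) := Finset.univ.filter (fun i => u i ≠ v i)

lemma mem_diff_iff {u v : V r} {i : Fin r} : i ∈ diff u v ↔ u i ≠ v i := by
  simp [diff]

lemma diff_comm (u v : V r) : diff u v = diff v u := by
  ext i; simp [mem_diff_iff, ne_comm]

lemma diff_self (u : V r) : diff u u = ∅ := by
  ext i; simp [mem_diff_iff]

lemma eq_of_diff_empty {u v : V r} (h : diff u v = ∅) : u = v := by
  funext i
  by_contra hi
  exact absurd (mem_diff_iff.2 hi) (by simp [h])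

lemma fin2_ne_iff {a b : Fin 2} : a ≠ b ↔ b = a + 1 := by
  revert a b; decide

lemma flip_apply_self (u : V r) (i : Fin r) : flip u i i = u i + 1 := by
  simp [flip]

lemma flip_apply_ne (u : V r) {i j : Fin r} (h : j ≠ i) : flip u i j = u j := by
  simp [flip, Function.update_of_ne h]

lemma flip_ne_self (u : V r) (i : Fin r) : flip u i i ≠ u i := by
  rw [flip_apply_self]
  have : ∀ a : Fin 2, a + 1 ≠ a := by decide
  exact this (u i)

lemma adj_flip (u : V r) (i : Fin r) : (Q r).Adj u (flip u i) := by
  refine ⟨i, ?_, fun j hj => (flip_apply_ne u hj).symm⟩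
  simp [SimpleGraph.top_adj]
  exact fun h => flip_ne_self u i h.symm

lemma adj_iff {u v : V r} : (Q r).Adj u v ↔ ∃ i, v = flip u i := by
  constructor
  · rintro ⟨i, hadj, heq⟩
    refine ⟨i, funext fun j => ?_⟩
    rcases eq_or_ne j i with rfl | hj
    · rw [flip_apply_self]
      have hne : u j ≠ v j := by simpa using hadj
      exact fin2_ne_iff.1 hne
    · rw [flip_apply_ne u hj]; exact (heq j hj).symm
  · rintro ⟨i, rfl⟩; exact adj_flip u i

lemma fin2_flip_ne {a b : Fin 2} : a + 1 ≠ b ↔ a = b := by revert a b; decide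

lemma diff_flip_left (u w : V r) (i : Fin r) :
    diff (flip u i) w = (diff u w) ∆ {i} := by
  ext j
  rw [mem_diff_iff, Finset.mem_symmDiff]
  rcases eq_or_ne j i with rfl | hj
  · simp [flip_apply_self, fin2_flip_ne, mem_diff_iff]
  · simp [flip_apply_ne u hj, mem_diff_iff, hj]

lemma diff_foldl (l : List (Fin r)) (hl : l.Nodup) (u w : V r) :
    diff (List.foldl flip u l) w = (diff u w) ∆ l.toFinset := by
  induction l generalizing u with
  | nil => ext j; simp [Finset.mem_symmDiff]
  | cons i l ih =>
    rw [List.nodup_cons] at hl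
    have h1 : (List.foldl flip u (i :: l)) = List.foldl flip (flip u i) l := rfl
    rw [h1, ih hl.2, diff_flip_left]
    rw [symmDiff_assoc]
    congr 1
    rw [List.toFinset_cons, Disjoint.symmDiff_eq_sup (by simpa using hl.1)]
    exact (Finset.insert_eq i _).symm

lemma foldl_eq {u v : V r} (l : List (Fin r)) (hl : l.Nodup) (ht : l.toFinset = diff u v) :
    List.foldl flip u l = v := by
  apply eq_of_diff_empty
  rw [diff_foldl l hl, ht, symmDiff_self]
  rfl

def walkOfList : (l : List (Fin r)) → (u : V r) → (Q r).Walk u (l.foldl flip u)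
  | [], _ => .nil
  | i :: l, u => .cons (adj_flip u i) (walkOfList l (flip u i))

@[simp] lemma length_walkOfList (l : List (Fin r)) (u : V r) :
    (walkOfList l u).length = l.length := by
  induction l generalizing u with
  | nil => rfl
  | cons i l ih => simpa [walkOfList] using ih (flip u i)

lemma mem_support_walkOfList {l : List (Fin r)} {u x : V r} :
    x ∈ (walkOfList l u).support ↔ ∃ k, x = List.foldl flip u (l.take k) := by
  induction l generalizing u with
  | nil => simp [walkOfList]
  | cons i l ih =>
    rw [show (walkOfList (i :: l) u).support = u :: (walkOfList l (flip u i)).support from rfl]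
    simp only [List.mem_cons, ih]
    constructor
    · rintro (rfl | ⟨k, rfl⟩)
      · exact ⟨0, rfl⟩
      · exact ⟨k + 1, rfl⟩
    · rintro ⟨k, rfl⟩
      cases k with
      | zero => exact Or.inl rfl
      | succ k => exact Or.inr ⟨k, rfl⟩

lemma card_diff_le_walk_length {u v : V r} (p : (Q r).Walk u v) :
    (diff u v).card ≤ p.length := by
  induction p with
  | nil => simp [diff_self]
  | @cons u u' v h p ih =>
    obtain ⟨i, rfl⟩ := adj_iff.1 h
    have hsub : diff u v ⊆ insert i (diff (flip u i) v) := by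
      intro j hj
      rcases eq_or_ne j i with rfl | hji
      · exact Finset.mem_insert_self _ _
      · refine Finset.mem_insert_of_mem ?_
        rw [mem_diff_iff, flip_apply_ne u hji]
        exact mem_diff_iff.1 hj
    have : (diff u v).card ≤ p.length + 1 :=
      calc (diff u v).card ≤ (insert i (diff (flip u i) v)).card := Finset.card_le_card hsub
        _ ≤ (diff (flip u i) v).card + 1 := Finset.card_insert_le _ _
        _ ≤ p.length + 1 := by omega
    simpa using this

noncomputable def geoWalk (u v : V r) : (Q r).Walk u v :=
  (walkOfList (diff u v).toList u).copy rfl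
    (foldl_eq _ (Finset.nodup_toList _) (Finset.toList_toFinset _))

@[simp] lemma length_geoWalk (u v : V r) : (geoWalk u v).length = (diff u v).card := by
  simp [geoWalk]

lemma dist_eq (u v : V r) : (Q r).dist u v = (diff u v).card := by
  have hreach : (Q r).Reachable u v := ⟨geoWalk u v⟩
  obtain ⟨p, hp⟩ := hreach.exists_walk_length_eq_dist
  refine le_antisymm ?_ ?_
  · simpa using SimpleGraph.dist_le (geoWalk u v)
  · rw [← hp]; exact card_diff_le_walk_length p


lemma diff_flip_self (u : V r) (i : Fin r) : diff (flip u i) u = {i} := by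
  rw [diff_flip_left, diff_self]
  ext j; simp [Finset.mem_symmDiff]

lemma flip_inj {u : V r} {i j : Fin r} (h : flip u i = flip u j) : i = j := by
  have : ({i} : Finset (Fin r)) = {j} := by
    rw [← diff_flip_self u i, ← diff_flip_self u j, h]
  simpa using this

lemma isPath_walkOfList {l : List (Fin r)} (hl : l.Nodup) (u : V r) :
    (walkOfList l u).IsPath := by
  induction l generalizing u with
  | nil => exact SimpleGraph.Walk.IsPath.nil
  | cons i l ih =>
    rw [List.nodup_cons] at hl
    refine SimpleGraph.Walk.IsPath.cons (ih hl.2 _) ?_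
    rw [mem_support_walkOfList]
    rintro ⟨k, hk⟩
    have hd := diff_foldl (l.take k) (hl.2.sublist (List.take_sublist _ _)) (flip u i) u
    rw [← hk, diff_self, diff_flip_self] at hd
    have : i ∈ ({i} : Finset (Fin r)) ∆ (l.take k).toFinset := by
      rw [Finset.mem_symmDiff]
      refine Or.inl ⟨Finset.mem_singleton_self i, fun hi => hl.1 ?_⟩
      exact (List.take_subset k l) (List.mem_toFinset.1 hi)
    rw [← hd] at this
    simp at this

lemma support_head (l : List (Fin r)) (u : V r) :
    (walkOfList l u).support = u :: (walkOfList l u).support.tail := by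
  exact SimpleGraph.Walk.support_eq_cons _

lemma walkOfList_support_inj : ∀ (l₁ l₂ : List (Fin r)) (u : V r),
    (walkOfList l₁ u).support = (walkOfList l₂ u).support → l₁ = l₂ := by
  intro l₁
  induction l₁ with
  | nil =>
    intro l₂ u h
    cases l₂ with
    | nil => rfl
    | cons j l₂ =>
      have := congrArg List.length h
      simp only [SimpleGraph.Walk.length_support, length_walkOfList] at this
      simp at this
  | cons i l₁ ih =>
    intro l₂ u h
    cases l₂ with
    | nil =>
      have := congrArg List.length h
      simp only [SimpleGraph.Walk.length_support, length_walkOfList] at this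
      simp at this
    | cons j l₂ =>
      have h1 : (walkOfList (i :: l₁) u).support
          = u :: (walkOfList l₁ (flip u i)).support := rfl
      have h2 : (walkOfList (j :: l₂) u).support
          = u :: (walkOfList l₂ (flip u j)).support := rfl
      rw [h1, h2] at h
      have h3 := List.tail_eq_of_cons_eq h
      have hij : flip u i = flip u j := by
        have e1 := support_head l₁ (flip u i)
        have e2 := support_head l₂ (flip u j)
        rw [e1, e2] at h3
        exact List.head_eq_of_cons_eq h3
      obtain rfl : i = j := flip_inj hij
      rw [ih l₂ (flip u i) h3]

lemma copy_rfl_eq {u v : V r} (p : (Q r).Walk u v) (h : v = v) : p.copy rfl h = p := by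
  have : h = rfl := rfl
  rw [this, SimpleGraph.Walk.copy_rfl_rfl]

/-- The geodesic subtype. -/
def Geo (u v : V r) := {p : (Q r).Walk u v // p.IsPath ∧ p.length = (Q r).dist u v}

/-- nodup lists with a given toFinset. -/
def Lists (s : Finset (Fin r)) := {l : List (Fin r) // l.Nodup ∧ l.toFinset = s}

lemma geo_props {u v : V r} (l : List (Fin r)) (hnd : l.Nodup) (hts : l.toFinset = diff u v) :
    ((walkOfList l u).copy rfl (foldl_eq _ hnd hts)).IsPath ∧
    ((walkOfList l u).copy rfl (foldl_eq _ hnd hts)).length = (Q r).dist u v := by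
  constructor
  · rw [SimpleGraph.Walk.isPath_def, SimpleGraph.Walk.support_copy]
    exact (isPath_walkOfList hnd u).2
  · rw [SimpleGraph.Walk.length_copy, length_walkOfList, dist_eq, ← hts,
      List.toFinset_card_of_nodup hnd]

noncomputable def fGeo {u v : V r} (l : Lists (diff u v)) : Geo u v :=
  ⟨(walkOfList l.1 u).copy rfl (foldl_eq _ l.2.1 l.2.2), geo_props l.1 l.2.1 l.2.2⟩

lemma exists_list_of_walk : ∀ {u v : V r} (p : (Q r).Walk u v), p.length = (diff u v).card →
    ∃ l : List (Fin r), l.Nodup ∧ l.toFinset = diff u v ∧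
      ∃ (hh : List.foldl flip u l = v), (walkOfList l u).copy rfl hh = p := by
  intro u v p
  induction p with
  | nil =>
    intro _
    exact ⟨[], List.nodup_nil, by simp [diff_self], rfl, SimpleGraph.Walk.copy_rfl_rfl _⟩
  | @cons a b c h q ih =>
    intro hlen
    obtain ⟨i, rfl⟩ := adj_iff.1 h
    have hlen' : q.length + 1 = (diff a c).card := by simpa using hlen
    have hql := card_diff_le_walk_length q
    have hi : i ∈ diff a c := by
      by_contra hi
      have hd : diff (flip a i) c = diff a c ∆ {i} := diff_flip_left a c i
      have hsub : insert i (diff a c) ⊆ diff (flip a i) c := by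
        intro j hj
        rw [hd, Finset.mem_symmDiff]
        rcases Finset.mem_insert.1 hj with rfl | hj
        · right; simp [hi]
        · left
          refine ⟨hj, fun hji => ?_⟩
          rw [Finset.mem_singleton] at hji
          exact hi (hji ▸ hj)
      have hc := Finset.card_le_card hsub
      rw [Finset.card_insert_of_notMem hi] at hc
      omega
    have hd2 : diff (flip a i) c = (diff a c).erase i := by
      rw [diff_flip_left]
      ext j
      rw [Finset.mem_symmDiff, Finset.mem_erase]
      constructor
      · rintro (⟨hj, hji⟩ | ⟨hj, hji⟩)
        · exact ⟨by simpa using hji, hj⟩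
        · rw [Finset.mem_singleton] at hj; subst hj; exact absurd hi hji
      · rintro ⟨hji, hj⟩; exact Or.inl ⟨hj, by simpa using hji⟩
    have hcard : q.length = (diff (flip a i) c).card := by
      rw [hd2, Finset.card_erase_of_mem hi]
      omega
    obtain ⟨l, hnd, hts, hh, hcopy⟩ := ih hcard
    subst hh
    refine ⟨i :: l, ?_, ?_, rfl, ?_⟩
    · rw [List.nodup_cons]
      refine ⟨fun hil => ?_, hnd⟩
      have hmem : i ∈ diff (flip a i) _ := hts ▸ List.mem_toFinset.2 hil
      rw [hd2] at hmem
      exact (Finset.notMem_erase i _) hmem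
    · rw [List.toFinset_cons, hts, hd2, Finset.insert_erase hi]
    · rw [copy_rfl_eq] at hcopy
      rw [← hcopy]
      rfl

lemma fGeo_bijective (u v : V r) : Function.Bijective (fGeo (u := u) (v := v)) := by
  constructor
  · rintro ⟨l₁, h₁⟩ ⟨l₂, h₂⟩ h
    have hs : (walkOfList l₁ u).support = (walkOfList l₂ u).support := by
      have := congrArg (fun q : Geo u v => q.1.support) h
      simpa [fGeo, SimpleGraph.Walk.support_copy] using this
    exact Subtype.ext (walkOfList_support_inj l₁ l₂ u hs)
  · rintro ⟨p, hp, hlen⟩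
    rw [dist_eq] at hlen
    obtain ⟨l, hnd, hts, hh, hcopy⟩ := exists_list_of_walk p hlen
    exact ⟨⟨l, hnd, hts⟩, Subtype.ext hcopy⟩


lemma card_lists (s : Finset (Fin r)) :
    Nat.card (Lists (r := r) s) = Nat.factorial s.card := by
  have e1 : Lists (r := r) s ≃ {l : List (Fin r) // List.Perm l s.toList} := by
    apply Equiv.subtypeEquivRight
    intro l
    constructor
    · rintro ⟨hnd, hts⟩
      exact List.perm_of_nodup_nodup_toFinset_eq hnd (Finset.nodup_toList s)
        (by rw [hts, Finset.toList_toFinset])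
    · intro hp
      exact ⟨hp.nodup_iff.2 (Finset.nodup_toList s),
        by rw [List.toFinset_eq_of_perm _ _ hp, Finset.toList_toFinset]⟩
  have e2 : {l : List (Fin r) // List.Perm l s.toList}
      ≃ {l : List (Fin r) // l ∈ (s.toList.permutations).toFinset} := by
    apply Equiv.subtypeEquivRight
    intro l
    rw [List.mem_toFinset, List.mem_permutations]
  rw [Nat.card_congr (e1.trans e2), Nat.card_eq_fintype_card, Fintype.card_coe,
    List.toFinset_card_of_nodup (List.nodup_permutations _ (Finset.nodup_toList s)),
    List.length_permutations, Finset.length_toList]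

lemma geodesicCount_eq (u v : V r) :
    geodesicCount (Q r) u v = Nat.factorial (diff u v).card := by
  rw [geodesicCount, ← card_lists (diff u v)]
  exact (Nat.card_congr (Equiv.ofBijective _ (fGeo_bijective u v))).symm


lemma eq_of_diff_eq {a b c : V r} (h : diff a c = diff b c) : a = b := by
  funext j
  have key : ∀ x y z : Fin 2, ((x ≠ z) ↔ (y ≠ z)) → x = y := by decide
  refine key _ _ (c j) ?_
  constructor
  · intro hj; exact mem_diff_iff.1 (h ▸ mem_diff_iff.2 hj)
  · intro hj; exact mem_diff_iff.1 (h.symm ▸ mem_diff_iff.2 hj)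

lemma diff_triangle (u v x : V r) : diff u v = diff u x ∆ diff x v := by
  ext j
  rw [Finset.mem_symmDiff]
  simp only [mem_diff_iff]
  have key : ∀ a b c : Fin 2,
      ((a ≠ c) ↔ ((a ≠ b) ∧ ¬(b ≠ c)) ∨ ((b ≠ c) ∧ ¬(a ≠ b))) := by decide
  exact key (u j) (x j) (v j)

lemma disjoint_of_subset_symmDiff {A B : Finset (Fin r)} (h : A ⊆ A ∆ B) :
    Disjoint A B := by
  rw [Finset.disjoint_left]
  intro j hjA hjB
  rcases Finset.mem_symmDiff.1 (h hjA) with ⟨-, hj⟩ | ⟨-, hj⟩ <;> exact hj (by assumption)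

lemma mem_support_iff_prefix {u v x : V r} {l : List (Fin r)} (hnd : l.Nodup) :
    x ∈ (walkOfList l u).support ↔ ∃ k, (l.take k).toFinset = diff u x := by
  rw [mem_support_walkOfList]
  constructor
  · rintro ⟨k, rfl⟩
    refine ⟨k, ?_⟩
    have hd := diff_foldl (l.take k) (hnd.sublist (List.take_sublist _ _)) u u
    rw [diff_self] at hd
    rw [diff_comm, hd]
    ext j; simp [Finset.mem_symmDiff]
  · rintro ⟨k, hk⟩
    refine ⟨k, ?_⟩
    apply eq_of_diff_eq (c := u)
    have hd := diff_foldl (l.take k) (hnd.sublist (List.take_sublist _ _)) u u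
    rw [diff_self] at hd
    rw [hd, hk, diff_comm x u]
    ext j; simp [Finset.mem_symmDiff]

/-- Lists encoding geodesics from `u` to `v` passing through `x`. -/
def TL (u v x : V r) := {l : List (Fin r) // (l.Nodup ∧ l.toFinset = diff u v) ∧
    ∃ k, (l.take k).toFinset = diff u x}

lemma tl_disjoint {u v x : V r} (l : TL u v x) : Disjoint (diff u x) (diff x v) := by
  obtain ⟨l, ⟨hnd, hts⟩, k, hk⟩ := l
  apply disjoint_of_subset_symmDiff
  rw [← diff_triangle]
  rw [← hk, ← hts]
  intro j hj
  exact List.mem_toFinset.2 (List.take_subset k l (List.mem_toFinset.1 hj))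

lemma take_card_toFinset {u v x : V r} (l : List (Fin r)) (hnd : l.Nodup)
    (hts : l.toFinset = diff u v) (k : ℕ) (hk : (l.take k).toFinset = diff u x) :
    (l.take ((diff u x).card)).toFinset = diff u x := by
  rcases le_or_gt k l.length with hkl | hkl
  · have h1 : (l.take k).length = k := by rw [List.length_take]; omega
    have h2 : k = (diff u x).card := by
      rw [← hk, List.toFinset_card_of_nodup (hnd.sublist (List.take_sublist _ _)), h1]
    rw [← h2]; exact hk
  · rw [List.take_of_length_le (le_of_lt hkl)] at hk
    have h2 : l.length = (diff u x).card := by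
      rw [← hk, List.toFinset_card_of_nodup hnd]
    have h3 := List.take_of_length_le (show l.length ≤ (diff u x).card from le_of_eq h2)
    rw [h3]
    exact hk

noncomputable def tlEquiv {u v x : V r} (hdisj : Disjoint (diff u x) (diff x v)) :
    TL u v x ≃ Lists (diff u x) × Lists (diff x v) where
  toFun l := by
    obtain ⟨l, ⟨hnd, hts⟩, hpre⟩ := l
    have hk : (l.take ((diff u x).card)).toFinset = diff u x := by
      obtain ⟨k0, hk0⟩ := hpre
      exact take_card_toFinset l hnd hts k0 hk0
    refine ⟨⟨l.take ((diff u x).card), hnd.sublist (List.take_sublist _ _), hk⟩,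
      ⟨l.drop ((diff u x).card), hnd.sublist (List.drop_sublist _ _), ?_⟩⟩
    have happ := List.take_append_drop ((diff u x).card) l
    have hnd' : (l.take ((diff u x).card) ++ l.drop ((diff u x).card)).Nodup := by
      rw [happ]; exact hnd
    have hdis := (List.nodup_append.1 hnd').2.2
    have hun : (l.take ((diff u x).card)).toFinset ∪ (l.drop ((diff u x).card)).toFinset
        = diff u v := by
      rw [← List.toFinset_append, happ, hts]
    have hDuv : diff u v = diff u x ∪ diff x v := by
      rw [diff_triangle u v x, Disjoint.symmDiff_eq_sup hdisj]; rfl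
    ext j
    constructor
    · intro hj
      have hjD : j ∈ diff u v := by rw [← hun]; exact Finset.mem_union_right _ hj
      rw [hDuv] at hjD
      rcases Finset.mem_union.1 hjD with hjA | hjB
      · exfalso
        rw [← hk] at hjA
        exact hdis j (List.mem_toFinset.1 hjA) j (List.mem_toFinset.1 hj) rfl
      · exact hjB
    · intro hj
      have hjD : j ∈ diff u v := by rw [hDuv]; exact Finset.mem_union_right _ hj
      rw [← hun] at hjD
      rcases Finset.mem_union.1 hjD with hjA | hjd
      · exact absurd hj (Finset.disjoint_left.1 hdisj (hk ▸ hjA))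
      · exact hjd
  invFun p := by
    obtain ⟨⟨l₁, hnd₁, hts₁⟩, ⟨l₂, hnd₂, hts₂⟩⟩ := p
    refine ⟨l₁ ++ l₂, ⟨?_, ?_⟩, (diff u x).card, ?_⟩
    · rw [List.nodup_append]
      refine ⟨hnd₁, hnd₂, fun j hj₁ j' hj₂ hjj => ?_⟩
      exact Finset.disjoint_left.1 hdisj (hts₁ ▸ List.mem_toFinset.2 hj₁)
        (hts₂ ▸ List.mem_toFinset.2 (hjj ▸ hj₂))
    · rw [List.toFinset_append, hts₁, hts₂, diff_triangle u v x,
        Disjoint.symmDiff_eq_sup hdisj]; rfl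
    · rw [List.take_left' (by rw [← hts₁, List.toFinset_card_of_nodup hnd₁]), hts₁]
  left_inv := by
    rintro ⟨l, ⟨hnd, hts⟩, hpre⟩
    apply Subtype.ext
    simp only
    exact List.take_append_drop _ l
  right_inv := by
    rintro ⟨⟨l₁, hnd₁, hts₁⟩, ⟨l₂, hnd₂, hts₂⟩⟩
    have hlen : l₁.length = (diff u x).card := by
      rw [← hts₁, List.toFinset_card_of_nodup hnd₁]
    refine Prod.ext (Subtype.ext ?_) (Subtype.ext ?_)
    · simp only
      exact List.take_left' hlen
    · simp only
      exact List.drop_left' hlen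


noncomputable def throughEquiv (u v x : V r) :
    {p : (Q r).Walk u v // p.IsPath ∧ p.length = (Q r).dist u v ∧ x ∈ p.support}
      ≃ TL u v x := by
  refine (Equiv.subtypeEquivRight (fun p => ?_)).trans
    (((Equiv.subtypeSubtypeEquivSubtypeInter
        (fun p : (Q r).Walk u v => p.IsPath ∧ p.length = (Q r).dist u v)
        (fun p => x ∈ p.support)).symm).trans
      ((((Equiv.ofBijective _ (fGeo_bijective u v)).subtypeEquiv
          (p := fun l => x ∈ ((fGeo l).1.support))
          (q := fun g : Geo u v => x ∈ g.1.support) (fun l => by rfl)).symm).trans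
        ((Equiv.subtypeEquivRight (fun l : Lists (diff u v) => ?_)).trans
          (Equiv.subtypeSubtypeEquivSubtypeInter _ _))))
  · exact and_assoc.symm
  · show x ∈ ((walkOfList l.1 u).copy rfl _).support ↔ _
    rw [SimpleGraph.Walk.support_copy]
    exact mem_support_iff_prefix (v := v) l.2.1

lemma geodesicCountThrough_eq (u v x : V r) :
    geodesicCountThrough (Q r) u v x =
      if Disjoint (diff u x) (diff x v)
      then Nat.factorial (diff u x).card * Nat.factorial (diff x v).card
      else 0 := by
  rw [geodesicCountThrough, Nat.card_congr (throughEquiv u v x)]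
  split_ifs with hdisj
  · rw [Nat.card_congr (tlEquiv hdisj), Nat.card_prod, card_lists, card_lists]
  · have : IsEmpty (TL u v x) := ⟨fun l => hdisj (tl_disjoint l)⟩
    exact Nat.card_of_isEmpty


lemma card_diff_add {u w x : V r} (h : Disjoint (diff u x) (diff x w)) :
    (diff u w).card = (diff u x).card + (diff x w).card := by
  rw [diff_triangle u w x, Disjoint.symmDiff_eq_sup h]
  exact Finset.card_union_of_disjoint h

lemma pairDependency_eq (u w x : V r) :
    pairDependency (Q r) u w x =
      if Disjoint (diff u x) (diff x w) then
        (1 : ℚ) / (((diff u x).card + (diff x w).card).choose (diff u x).card) else 0 := by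
  rw [pairDependency, geodesicCount_eq, geodesicCountThrough_eq]
  split_ifs with h
  · set a := (diff u x).card
    set b := (diff x w).card
    rw [card_diff_add h]
    have e4 := Nat.choose_mul_factorial_mul_factorial (Nat.le_add_right a b)
    have hba : a + b - a = b := by omega
    rw [hba] at e4
    have hpos : 0 < ((a + b).choose a) := Nat.choose_pos (Nat.le_add_right a b)
    rw [div_eq_div_iff (by positivity) (by positivity)]
    push_cast
    rw [← e4]
    push_cast
    ring
  · simp

noncomputable def vEquiv (x : V r) : V r ≃ Finset (Fin r) where
  toFun u := diff x u
  invFun S := List.foldl flip x S.toList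
  left_inv u := foldl_eq _ (Finset.nodup_toList _) (Finset.toList_toFinset _)
  right_inv S := by
    show diff x (List.foldl flip x S.toList) = S
    rw [diff_comm]
    rw [diff_foldl _ (Finset.nodup_toList _) x x, diff_self, Finset.toList_toFinset]
    ext j; simp [Finset.mem_symmDiff]

lemma trinomial (n a b : ℕ) :
    n.choose a * (n - a).choose b = n.choose (a + b) * (a + b).choose a := by
  rcases le_or_gt (a + b) n with h | h
  · have ha : a ≤ n := le_trans (Nat.le_add_right a b) h
    have hb : b ≤ n - a := by omega
    apply Nat.eq_of_mul_eq_mul_right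
      (show 0 < a.factorial * (b.factorial * (n - a - b).factorial) by positivity)
    have e1 := Nat.choose_mul_factorial_mul_factorial ha
    have e2 := Nat.choose_mul_factorial_mul_factorial hb
    have e3 := Nat.choose_mul_factorial_mul_factorial h
    have e4 := Nat.choose_mul_factorial_mul_factorial (Nat.le_add_right a b)
    have hba : a + b - a = b := by omega
    have hrab : n - a - b = n - (a + b) := by omega
    rw [hba] at e4
    calc n.choose a * (n - a).choose b * (a.factorial * (b.factorial * (n - a - b).factorial))
        = (n.choose a * a.factorial) * ((n - a).choose b * b.factorial
            * ((n - a) - b).factorial) := by ring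
      _ = (n.choose a * a.factorial) * (n - a).factorial := by rw [e2]
      _ = n.factorial := by rw [← e1]
      _ = n.choose (a + b) * (a + b).factorial * (n - (a + b)).factorial := by rw [e3]
      _ = n.choose (a + b) * ((a + b).choose a * a.factorial * b.factorial)
            * (n - (a + b)).factorial := by rw [e4]
      _ = n.choose (a + b) * (a + b).choose a
            * (a.factorial * (b.factorial * (n - a - b).factorial)) := by rw [hrab]; ring
  · have h1 : n.choose (a + b) = 0 := Nat.choose_eq_zero_of_lt h
    rcases le_or_gt a n with ha | ha
    · have h2 : (n - a).choose b = 0 := Nat.choose_eq_zero_of_lt (by omega)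
      simp [h1, h2]
    · have h2 : n.choose a = 0 := Nat.choose_eq_zero_of_lt ha
      simp [h1, h2]


/-- The per-pair value as a function of the two cardinalities. -/
noncomputable def gq (a b : ℕ) : ℚ :=
  if a ≠ 0 ∧ b ≠ 0 then (1 : ℚ) / (((a + b).choose a : ℕ) : ℚ) else 0

lemma sum_disjoint_eq (S : Finset (Fin r)) (f : ℕ → ℚ) :
    ∑ T : Finset (Fin r), (if Disjoint S T then f T.card else 0)
      = ∑ b ∈ Finset.range (r + 1), ((Sᶜ.card).choose b : ℚ) * f b := by
  rw [← Finset.sum_filter]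
  have hfil : Finset.univ.filter (fun T => Disjoint S T) = Sᶜ.powerset := by
    ext T
    simp only [Finset.mem_filter, Finset.mem_univ, true_and, Finset.mem_powerset]
    constructor
    · intro h j hj
      rw [Finset.mem_compl]
      exact Finset.disjoint_right.1 h hj
    · intro h
      rw [Finset.disjoint_right]
      intro j hj
      have := h hj
      rw [Finset.mem_compl] at this
      exact this
  have hcard : Sᶜ.card ≤ r := by
    have := Finset.card_le_univ Sᶜ
    simpa using this
  have h1 : ∑ m ∈ Finset.range (Sᶜ.card + 1), (Sᶜ.card).choose m • f m
      = ∑ m ∈ Finset.range (r + 1), (Sᶜ.card).choose m • f m := by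
    apply Finset.sum_subset (Finset.range_subset_range.2 (by omega))
    intro b _ hb
    rw [Finset.mem_range, not_lt] at hb
    rw [Nat.choose_eq_zero_of_lt (by omega), zero_smul]
  rw [hfil, Finset.sum_powerset_apply_card, h1]
  exact Finset.sum_congr rfl fun b _ => by rw [nsmul_eq_mul]

lemma betweenness_sum (x : V r) :
    betweenness (Q r) x = (1 / 2) * ∑ a ∈ Finset.range (r + 1), (r.choose a : ℚ) *
      ∑ b ∈ Finset.range (r + 1), (((r - a).choose b : ℕ) : ℚ) * gq a b := by
  rw [betweenness]
  congr 1
  have hterm : ∀ u w : V r,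
      (if u ≠ w ∧ u ≠ x ∧ w ≠ x then pairDependency (Q r) u w x else 0)
        = (if Disjoint (diff x u) (diff x w) then gq (diff x u).card (diff x w).card
            else 0) := by
    intro u w
    by_cases hD : Disjoint (diff x u) (diff x w)
    · rw [if_pos hD]
      by_cases ha : (diff x u).card = 0
      · have hux : u = x := (eq_of_diff_empty (Finset.card_eq_zero.1 ha)).symm
        rw [if_neg (by tauto), gq, if_neg (by tauto)]
      · by_cases hb : (diff x w).card = 0
        · have hwx : w = x := (eq_of_diff_empty (Finset.card_eq_zero.1 hb)).symm
          rw [if_neg (by tauto), gq, if_neg (by tauto)]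
        · have hux : u ≠ x := fun h => ha (by rw [h, diff_self, Finset.card_empty])
          have hwx : w ≠ x := fun h => hb (by rw [h, diff_self, Finset.card_empty])
          have huw : u ≠ w := by
            intro h
            subst h
            rw [disjoint_self] at hD
            exact ha (by rw [hD]; rfl)
          rw [if_pos ⟨huw, hux, hwx⟩, pairDependency_eq, diff_comm u x, if_pos hD,
            gq, if_pos ⟨ha, hb⟩]
    · rw [if_neg hD]
      split_ifs with hc
      · rw [pairDependency_eq, diff_comm u x, if_neg hD]
      · rfl
  rw [Finset.sum_congr rfl (fun u _ => Finset.sum_congr rfl (fun w _ => hterm u w))]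
  have step1 : (∑ u : V r, ∑ w : V r,
      (if Disjoint (diff x u) (diff x w) then gq (diff x u).card (diff x w).card else 0))
      = ∑ S : Finset (Fin r), ∑ T : Finset (Fin r),
        (if Disjoint S T then gq S.card T.card else 0) := by
    apply Fintype.sum_equiv (vEquiv x)
    intro u
    apply Fintype.sum_equiv (vEquiv x)
    intro w
    rfl
  rw [step1]
  have hS : ∀ S : Finset (Fin r),
      (∑ T : Finset (Fin r), (if Disjoint S T then gq S.card T.card else 0))
        = ∑ b ∈ Finset.range (r + 1), (((r - S.card).choose b : ℕ) : ℚ) * gq S.card b := by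
    intro S
    rw [sum_disjoint_eq S (fun b => gq S.card b)]
    have : Sᶜ.card = r - S.card := by
      rw [Finset.card_compl]
      simp
    rw [this]
  rw [Finset.sum_congr rfl (fun S _ => hS S)]
  have h0 := sum_disjoint_eq (∅ : Finset (Fin r))
    (fun a => ∑ b ∈ Finset.range (r + 1), (((r - a).choose b : ℕ) : ℚ) * gq a b)
  have hcompl : ((∅ : Finset (Fin r))ᶜ).card = r := by
    rw [Finset.compl_empty]
    simp
  rw [hcompl] at h0
  simp only [Finset.disjoint_empty_left, if_true] at h0
  rw [h0]


lemma sum_succ_mul_choose (hr : 1 ≤ r) :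
    ∑ i ∈ Finset.range r, (i + 1) * r.choose (i + 1) = r * 2 ^ (r - 1) := by
  have key : ∀ i, r.choose (i + 1) * (i + 1) = r * (r - 1).choose i := by
    intro i
    have := Nat.add_one_mul_choose_eq (r - 1) i
    have hr1 : r - 1 + 1 = r := by omega
    simp only [Nat.succ_eq_add_one, hr1] at this
    exact this.symm
  calc ∑ i ∈ Finset.range r, (i + 1) * r.choose (i + 1)
      = ∑ i ∈ Finset.range r, r * (r - 1).choose i := by
        refine Finset.sum_congr rfl fun i _ => ?_
        rw [mul_comm, key i]
    _ = r * ∑ i ∈ Finset.range r, (r - 1).choose i := by rw [Finset.mul_sum]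
    _ = r * 2 ^ (r - 1) := by
        congr 1
        have := Nat.sum_range_choose (r - 1)
        have hr1 : r - 1 + 1 = r := by omega
        rw [hr1] at this
        exact this

lemma sum_choose_tail : ∑ i ∈ Finset.range r, r.choose (i + 1) = 2 ^ r - 1 := by
  have h := Nat.sum_range_choose r
  rw [Finset.sum_range_succ'] at h
  simp only [Nat.choose_zero_right] at h
  omega

lemma final_sum (hr : 1 ≤ r) :
    ∑ a ∈ Finset.range (r + 1), (r.choose a : ℚ) *
        ∑ b ∈ Finset.range (r + 1), (((r - a).choose b : ℕ) : ℚ) * gq a b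
      = (r : ℚ) * 2 ^ (r - 1) - 2 ^ r + 1 := by
  have hterm : ∀ a b : ℕ, (r.choose a : ℚ) * ((((r - a).choose b : ℕ) : ℚ) * gq a b)
      = if a ≠ 0 ∧ b ≠ 0 then ((r.choose (a + b) : ℕ) : ℚ) else 0 := by
    intro a b
    rw [gq]
    split_ifs with h
    · have hpos : 0 < (a + b).choose a := Nat.choose_pos (Nat.le_add_right a b)
      have htri := trinomial r a b
      have hc : ((r.choose a : ℚ)) * (((r - a).choose b : ℕ) : ℚ)
          = ((r.choose (a + b) : ℕ) : ℚ) * (((a + b).choose a : ℕ) : ℚ) := by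
        have : ((r.choose a * (r - a).choose b : ℕ) : ℚ)
            = ((r.choose (a + b) * (a + b).choose a : ℕ) : ℚ) := by rw [htri]
        push_cast at this
        exact this
      have hne : (((a + b).choose a : ℕ) : ℚ) ≠ 0 := by
        exact_mod_cast Nat.pos_iff_ne_zero.1 hpos
      field_simp
      linear_combination hc
    · ring
  have step1 : ∑ a ∈ Finset.range (r + 1), (r.choose a : ℚ) *
        ∑ b ∈ Finset.range (r + 1), (((r - a).choose b : ℕ) : ℚ) * gq a b
      = ∑ a ∈ Finset.range (r + 1), ∑ b ∈ Finset.range (r + 1),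
          (if a ≠ 0 ∧ b ≠ 0 then ((r.choose (a + b) : ℕ) : ℚ) else 0) := by
    refine Finset.sum_congr rfl fun a _ => ?_
    rw [Finset.mul_sum]
    exact Finset.sum_congr rfl fun b _ => hterm a b
  rw [step1, ← Finset.sum_product']
  have hmaps : ∀ p ∈ Finset.range (r + 1) ×ˢ Finset.range (r + 1),
      p.1 + p.2 ∈ Finset.range (2 * r + 1) := by
    rintro ⟨a, b⟩ hp
    rw [Finset.mem_product, Finset.mem_range, Finset.mem_range] at hp
    rw [Finset.mem_range]
    omega
  rw [← Finset.sum_fiberwise_of_maps_to hmaps]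
  have inner : ∀ d ∈ Finset.range (2 * r + 1),
      (∑ p ∈ (Finset.range (r + 1) ×ˢ Finset.range (r + 1)).filter
          (fun p => p.1 + p.2 = d),
        (if p.1 ≠ 0 ∧ p.2 ≠ 0 then ((r.choose (p.1 + p.2) : ℕ) : ℚ) else 0))
      = ((((Finset.range (r + 1) ×ˢ Finset.range (r + 1)).filter
          (fun p => p.1 + p.2 = d)).filter (fun p => p.1 ≠ 0 ∧ p.2 ≠ 0)).card : ℚ)
        * ((r.choose d : ℕ) : ℚ) := by
    intro d _
    rw [Finset.sum_congr rfl (fun p hp => by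
      rw [(Finset.mem_filter.1 hp).2])]
    rw [← Finset.sum_filter, Finset.sum_const, nsmul_eq_mul]
  rw [Finset.sum_congr rfl inner]
  have hcnt : ∀ d, d ≤ r → ((((Finset.range (r + 1) ×ˢ Finset.range (r + 1)).filter
      (fun p => p.1 + p.2 = d)).filter (fun p => p.1 ≠ 0 ∧ p.2 ≠ 0)).card) = d - 1 := by
    intro d hd
    have himg : (((Finset.range (r + 1) ×ˢ Finset.range (r + 1)).filter
        (fun p => p.1 + p.2 = d)).filter (fun p => p.1 ≠ 0 ∧ p.2 ≠ 0))
        = (Finset.Ioo 0 d).image (fun a => (a, d - a)) := by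
      ext ⟨a, b⟩
      simp only [Finset.mem_filter, Finset.mem_product, Finset.mem_range,
        Finset.mem_image, Finset.mem_Ioo, Prod.mk.injEq]
      constructor
      · rintro ⟨⟨⟨ha, hb⟩, hab⟩, ha0, hb0⟩
        exact ⟨a, ⟨by omega, by omega⟩, rfl, by omega⟩
      · rintro ⟨a', ⟨h0, hd'⟩, rfl, rfl⟩
        refine ⟨⟨⟨by omega, by omega⟩, by omega⟩, by omega, by omega⟩
    rw [himg, Finset.card_image_of_injective _ (fun a₁ a₂ h => (Prod.ext_iff.1 h).1),
      Nat.card_Ioo]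
    omega
  have step2 : ∑ d ∈ Finset.range (2 * r + 1),
      (((((Finset.range (r + 1) ×ˢ Finset.range (r + 1)).filter
          (fun p => p.1 + p.2 = d)).filter (fun p => p.1 ≠ 0 ∧ p.2 ≠ 0)).card : ℚ)
        * ((r.choose d : ℕ) : ℚ))
      = ∑ d ∈ Finset.range (r + 1), (((d - 1 : ℕ) : ℚ) * ((r.choose d : ℕ) : ℚ)) := by
    refine ((Finset.sum_subset (Finset.range_subset_range.2
        (show r + 1 ≤ 2 * r + 1 by omega)) ?_).symm).trans ?_
    · intro d _ hd
      rw [Finset.mem_range, not_lt] at hd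
      rw [Nat.choose_eq_zero_of_lt (show r < d by omega)]
      simp
    · refine Finset.sum_congr rfl fun d hd => ?_
      rw [Finset.mem_range] at hd
      rw [hcnt d (by omega)]
  rw [step2]
  rw [Finset.sum_range_succ']
  simp only [Nat.zero_sub, Nat.cast_zero, zero_mul, add_zero, Nat.add_sub_cancel,
    Nat.cast_ofNat]
  have hA : ∑ i ∈ Finset.range r, ((i : ℚ)) * ((r.choose (i + 1) : ℕ) : ℚ)
      = (∑ i ∈ Finset.range r, ((i + 1 : ℚ)) * ((r.choose (i + 1) : ℕ) : ℚ))
        - ∑ i ∈ Finset.range r, ((r.choose (i + 1) : ℕ) : ℚ) := by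
    rw [← Finset.sum_sub_distrib]
    exact Finset.sum_congr rfl fun i _ => by ring
  have h1 : (∑ i ∈ Finset.range r, ((i + 1 : ℚ)) * ((r.choose (i + 1) : ℕ) : ℚ))
      = ((r * 2 ^ (r - 1) : ℕ) : ℚ) := by
    rw [← sum_succ_mul_choose hr]
    push_cast
    rfl
  have h2 : (∑ i ∈ Finset.range r, ((r.choose (i + 1) : ℕ) : ℚ))
      = ((2 ^ r - 1 : ℕ) : ℚ) := by
    rw [← sum_choose_tail]
    push_cast
    rfl
  have hcast : ∀ i : ℕ, (((i + 1 - 1 : ℕ)) : ℚ) = (i : ℚ) := by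
    intro i; norm_num
  calc (∑ i ∈ Finset.range r, (((i + 1 - 1 : ℕ)) : ℚ) * ((r.choose (i + 1) : ℕ) : ℚ))
      = ∑ i ∈ Finset.range r, ((i : ℚ)) * ((r.choose (i + 1) : ℕ) : ℚ) := by
        exact Finset.sum_congr rfl fun i _ => by rw [hcast i]
    _ = ((r * 2 ^ (r - 1) : ℕ) : ℚ) - ((2 ^ r - 1 : ℕ) : ℚ) := by rw [hA, h1, h2]
    _ = (r : ℚ) * 2 ^ (r - 1) - 2 ^ r + 1 := by
        have h3 : (1 : ℕ) ≤ 2 ^ r := Nat.one_le_two_pow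
        push_cast [Nat.cast_sub h3]
        ring

end Hyp

/-- For `r ≥ 1` and any vertex `v` of the `r`-dimensional hypercube
`Q_r = □ᵢ K₂`, `B(v) = (r-2)·2^(r-2) + 1/2` (with `2^(r-2)` read as a rational power,
so that the formula also covers `r = 1`). -/
theorem betweenness_hypercube (r : ℕ) (hr : 1 ≤ r) (v : Fin r → Fin 2) :
    betweenness (boxProdPi fun _ : Fin r => (⊤ : SimpleGraph (Fin 2))) v =
      ((r : ℚ) - 2) * (2 : ℚ) ^ ((r : ℤ) - 2) + 1 / 2 := by
  show betweenness (Hyp.Q r) v = _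
  rw [Hyp.betweenness_sum v, Hyp.final_sum hr]
  have h2 : (2 : ℚ) ^ r = 2 ^ (r - 1) * 2 := by
    rw [← pow_succ]
    congr 1
    omega
  have hz : (2 : ℚ) ^ ((r : ℤ) - 2) = (2 : ℚ) ^ (r - 1) / 2 := by
    have e : (r : ℤ) - 2 = ((r - 1 : ℕ) : ℤ) - 1 := by omega
    rw [e, zpow_sub₀ (two_ne_zero), zpow_one, zpow_natCast]
  rw [hz, h2]
  ring
end
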